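/- arXiv:1310.7570 — 6 statements merged into one kernel-verified Lean document; each statement's English description precedes it below -/
import Mathlib

section
/- For k ∈ {3,4} and all z, x, g, η ∈ ℂ one has the identity θ_k(z+g+η|τ/2) · θ₁(z−η−g+x|τ) · θ₁(z−η−g−x|τ) − θ_k(z−g−η|τ/2) · θ₁(z+η+g+x|τ) · θ₁(z+η+g−x|τ) = θ₁(2z|τ) · θ₁(−2g−2η|τ) · θ_k(x|τ/2). -/
noncomputable section

open Complex BigOperators Finset

local notation "π" => (Real.pi : ℂ)

/-- Jacobi theta function θ₁(z|σ). -/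
def theta1 (z σ : ℂ) : ℂ :=
  -∑' n : ℤ, Complex.exp (π * I * ((n : ℂ) + 1/2)^2 * σ) *
      Complex.exp (2 * π * I * ((n : ℂ) + 1/2) * (z + 1/2))

/-- Jacobi theta function θ₂(z|σ). -/
def theta2 (z σ : ℂ) : ℂ := theta1 (z + 1/2) σ

/-- Jacobi theta function θ₃(z|σ). -/
def theta3 (z σ : ℂ) : ℂ :=
  Complex.exp (π * I * σ / 4 + π * I * z) * theta2 (z + σ/2) σ

/-- Jacobi theta function θ₄(z|σ). -/
def theta4 (z σ : ℂ) : ℂ := theta3 (z + 1/2) σ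

/-- R(σ) = e^{-πiσ/4} / (i (e^{2πiσ}; e^{2πiσ})_∞). -/
def Rfun (σ : ℂ) : ℂ :=
  Complex.exp (-π * I * σ / 4) /
    (I * ∏' k : ℕ, (1 - Complex.exp (2 * π * I * σ * ((k : ℂ) + 1))))

/-! ### Auxiliary series machinery -/

/-- Term of a θ₁-type series. -/
def T1 (σ u : ℂ) (n : ℤ) : ℂ :=
  Complex.exp (π * I * σ * ((n : ℂ) + 1/2)^2 + 2 * π * I * ((n : ℂ) + 1/2) * u)

/-- Term of a θ₃/θ₄-type series (δ = 0 for θ₃, δ = 1 for θ₄). -/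
def T3 (σ u : ℂ) (δ : ℤ) (n : ℤ) : ℂ :=
  Complex.exp (π * I * σ * (n : ℂ)^2 + 2 * π * I * (n : ℂ) * u + π * I * (δ : ℂ) * (n : ℂ))

lemma summable_T1 {σ : ℂ} (hσ : 0 < σ.im) (u : ℂ) : Summable (T1 σ u) := by
  have h := ((summable_jacobiTheta₂_term_iff (u + σ/2) σ).mpr hσ).mul_left
    (Complex.exp (π * I * σ / 4 + π * I * u))
  refine h.congr fun n => ?_
  rw [jacobiTheta₂_term, T1, ← Complex.exp_add]
  congr 1
  ring

lemma summable_T3 {σ : ℂ} (hσ : 0 < σ.im) (u : ℂ) (δ : ℤ) : Summable (T3 σ u δ) := by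
  have h := (summable_jacobiTheta₂_term_iff (u + (δ : ℂ)/2) σ).mpr hσ
  refine h.congr fun n => ?_
  rw [jacobiTheta₂_term, T3]
  congr 1
  ring

lemma theta1_series (z σ : ℂ) : theta1 z σ = -∑' n : ℤ, T1 σ (z + 1/2) n := by
  unfold theta1 T1
  congr 1
  refine tsum_congr fun n => ?_
  rw [← Complex.exp_add]
  congr 1
  ring

lemma theta3_series (z σ : ℂ) : theta3 z σ = ∑' n : ℤ, T3 σ z 0 n := by
  rw [theta3, theta2, theta1_series, mul_neg, ← tsum_mul_left, ← tsum_neg]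
  have key : ∀ n : ℤ,
      -(Complex.exp (π * I * σ / 4 + π * I * z) * T1 σ (z + σ/2 + 1/2 + 1/2) n)
        = T3 σ z 0 (n + 1) := by
    intro n
    rw [T1, T3, ← Complex.exp_add]
    have h1 : π * I * σ / 4 + π * I * z +
        (π * I * σ * ((n : ℂ) + 1/2)^2 + 2 * π * I * ((n : ℂ) + 1/2) * (z + σ/2 + 1/2 + 1/2))
        = (π * I * σ * (((n+1 : ℤ) : ℂ))^2 + 2 * π * I * (((n+1 : ℤ) : ℂ)) * z
            + π * I * (((0 : ℤ) : ℤ) : ℂ) * (((n+1 : ℤ) : ℂ))) + (n : ℂ) * (2 * π * I) + π * I := by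
      push_cast
      ring
    rw [h1, Complex.exp_add, Complex.exp_add, Complex.exp_int_mul_two_pi_mul_I,
      Complex.exp_pi_mul_I]
    ring
  calc ∑' n : ℤ, -(Complex.exp (π * I * σ / 4 + π * I * z) * T1 σ (z + σ/2 + 1/2 + 1/2) n)
      = ∑' n : ℤ, T3 σ z 0 (n + 1) := tsum_congr key
    _ = ∑' n : ℤ, T3 σ z 0 n := by
        simpa using (Equiv.addRight (1 : ℤ)).tsum_eq (T3 σ z 0)

lemma theta4_series (z σ : ℂ) : theta4 z σ = ∑' n : ℤ, T3 σ z 1 n := by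
  rw [theta4, theta3_series]
  refine tsum_congr fun n => ?_
  rw [T3, T3]
  congr 1
  push_cast
  ring

/-- Term of the product θ₁(a|τ)·θ₁(b|τ) as a series over ℤ² (modulus τ/2). -/
def DT (τ a b : ℂ) (p : ℤ × ℤ) : ℂ :=
  if Odd (p.1 + p.2) then
    Complex.exp (π * I * (τ/2) * ((p.1 : ℂ)^2 + (p.2 : ℂ)^2)
      + π * I * (p.1 : ℂ) * (a + b + 1) + π * I * (p.2 : ℂ) * (a - b))
  else 0

/-- The reindexing injection ℤ² → ℤ² onto pairs with odd coordinate-sum. -/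
def embD : ℤ × ℤ → ℤ × ℤ := fun q => (q.1 + q.2 + 1, q.1 - q.2)

lemma embD_inj : Function.Injective embD := by
  rintro ⟨a, b⟩ ⟨c, d⟩ h
  simp only [embD, Prod.mk.injEq] at h
  simp only [Prod.mk.injEq]
  constructor <;> omega

lemma support_DT_subset (τ a b : ℂ) :
    Function.support (DT τ a b) ⊆ Set.range embD := by
  rintro ⟨r, s⟩ hp
  rw [Function.mem_support, DT] at hp
  by_cases h : Odd (r + s)
  · obtain ⟨t, ht⟩ := h
    exact ⟨(t, r - 1 - t), by simp only [embD, Prod.mk.injEq]; constructor <;> omega⟩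
  · simp [h] at hp

lemma DT_embD (τ a b : ℂ) (q : ℤ × ℤ) :
    DT τ a b (embD q) = T1 τ (a + 1/2) q.1 * T1 τ (b + 1/2) q.2 := by
  obtain ⟨m, n⟩ := q
  rw [DT, embD]
  rw [if_pos (by exact ⟨m, by ring⟩ : Odd (m + n + 1 + (m - n)))]
  rw [T1, T1, ← Complex.exp_add]
  congr 1
  push_cast
  ring

lemma summable_DT {τ : ℂ} (hτ : 0 < τ.im) (a b : ℂ) : Summable (DT τ a b) := by
  have h1 : Summable fun q : ℤ × ℤ => T1 τ (a + 1/2) q.1 * T1 τ (b + 1/2) q.2 :=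
    summable_mul_of_summable_norm
      (summable_norm_iff.mpr (summable_T1 hτ _)) (summable_norm_iff.mpr (summable_T1 hτ _))
  have h2 : Summable fun q : ℤ × ℤ => DT τ a b (embD q) :=
    h1.congr fun q => (DT_embD τ a b q).symm
  obtain ⟨S, hS⟩ := h2
  exact ⟨S, (embD_inj.hasSum_iff
    (fun x hx => Function.notMem_support.mp fun hm => hx (support_DT_subset τ a b hm))).mp hS⟩

lemma prod_theta1 {τ : ℂ} (hτ : 0 < τ.im) (a b : ℂ) :
    theta1 a τ * theta1 b τ = ∑' p : ℤ × ℤ, DT τ a b p := by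
  calc theta1 a τ * theta1 b τ
      = (∑' n : ℤ, T1 τ (a + 1/2) n) * (∑' n : ℤ, T1 τ (b + 1/2) n) := by
        rw [theta1_series, theta1_series, neg_mul_neg]
    _ = ∑' q : ℤ × ℤ, T1 τ (a + 1/2) q.1 * T1 τ (b + 1/2) q.2 :=
        tsum_mul_tsum_of_summable_norm
          (summable_norm_iff.mpr (summable_T1 hτ _)) (summable_norm_iff.mpr (summable_T1 hτ _))
    _ = ∑' q : ℤ × ℤ, DT τ a b (embD q) := tsum_congr fun q => (DT_embD τ a b q).symm
    _ = ∑' p : ℤ × ℤ, DT τ a b p := embD_inj.tsum_eq (support_DT_subset τ a b)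

lemma exp_eq_sign_mul {X B : ℂ} (c : ℤ) (h : X = B + π * I * (c : ℂ)) :
    Complex.exp X = (-1 : ℂ)^c * Complex.exp B := by
  rw [h, Complex.exp_add, mul_comm]
  congr 1
  rw [show π * I * (c : ℂ) = (c : ℂ) * (π * I) by ring, Complex.exp_int_mul,
    Complex.exp_pi_mul_I]

lemma neg_one_zpow_ite (n : ℤ) : ((-1 : ℂ))^n = if n % 2 = 0 then 1 else -1 := by
  rcases Int.even_or_odd n with h | h
  · rw [Even.neg_one_zpow h, if_pos (Int.even_iff.mp h)]
  · rw [Odd.neg_one_zpow h, if_neg (by rw [Int.odd_iff] at h; omega)]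

lemma signs (δ k r s : ℤ) (hδ : δ = 0 ∨ δ = 1) :
    (if Odd (r + s) then ((-1 : ℂ))^(δ*k + r) else 0)
      - (if Odd (k + s) then ((-1 : ℂ))^(δ*r + k) else 0)
    = (if Odd (k + r) then ((-1 : ℂ))^(r + δ*s) else 0) := by
  simp only [Int.odd_iff, neg_one_zpow_ite]
  rcases hδ with rfl | rfl <;>
  rcases Int.even_or_odd k with ⟨a, hk⟩ | ⟨a, hk⟩ <;>
  rcases Int.even_or_odd r with ⟨b, hr⟩ | ⟨b, hr⟩ <;>
  rcases Int.even_or_odd s with ⟨c, hs⟩ | ⟨c, hs⟩ <;>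
  subst hk hr hs <;>
  repeat' first
    | rw [if_pos (by omega)]
    | rw [if_neg (by omega)]
  all_goals norm_num

/-- The three-term pointwise identity. -/
lemma pointwise (τ z w x : ℂ) (δ k r s : ℤ) (hδ : δ = 0 ∨ δ = 1) :
    T3 (τ/2) (z+w) δ k * DT τ (z-w+x) (z-w-x) (r, s)
      - T3 (τ/2) (z-w) δ r * DT τ (z+w+x) (z+w-x) (k, s)
    = DT τ (2*z) (-(2*w)) (r, k) * T3 (τ/2) x δ s := by
  set B : ℂ := π * I * (τ/2) * ((k : ℂ)^2 + (r : ℂ)^2 + (s : ℂ)^2)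
      + 2 * π * I * (k : ℂ) * (z + w) + 2 * π * I * (r : ℂ) * (z - w)
      + 2 * π * I * (s : ℂ) * x with hB
  have h1 : T3 (τ/2) (z+w) δ k * DT τ (z-w+x) (z-w-x) (r, s)
      = (if Odd (r + s) then ((-1 : ℂ))^(δ*k + r) else 0) * Complex.exp B := by
    rw [T3, DT]
    simp only []
    split_ifs with h
    · rw [← Complex.exp_add, exp_eq_sign_mul (B := B) (δ*k + r) (by rw [hB]; push_cast; ring)]
    · rw [mul_zero, zero_mul]
  have h2 : T3 (τ/2) (z-w) δ r * DT τ (z+w+x) (z+w-x) (k, s)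
      = (if Odd (k + s) then ((-1 : ℂ))^(δ*r + k) else 0) * Complex.exp B := by
    rw [T3, DT]
    simp only []
    split_ifs with h
    · rw [← Complex.exp_add, exp_eq_sign_mul (B := B) (δ*r + k) (by rw [hB]; push_cast; ring)]
    · rw [mul_zero, zero_mul]
  have h3 : DT τ (2*z) (-(2*w)) (r, k) * T3 (τ/2) x δ s
      = (if Odd (r + k) then ((-1 : ℂ))^(r + δ*s) else 0) * Complex.exp B := by
    rw [T3, DT]
    simp only []
    split_ifs with h
    · rw [← Complex.exp_add, exp_eq_sign_mul (B := B) (r + δ*s) (by rw [hB]; push_cast; ring)]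
    · rw [zero_mul, zero_mul]
  rw [h1, h2, h3, ← sub_mul, add_comm r k, signs δ k r s hδ]

/-- Reindexing equivalence used for the second sum. -/
def e2 : ℤ × ℤ × ℤ ≃ ℤ × ℤ × ℤ where
  toFun v := (v.2.1, v.1, v.2.2)
  invFun v := (v.2.1, v.1, v.2.2)
  left_inv _ := rfl
  right_inv _ := rfl

/-- Reindexing equivalence used for the right-hand sum. -/
def e3 : ℤ × ℤ × ℤ ≃ (ℤ × ℤ) × ℤ where
  toFun v := ((v.2.1, v.1), v.2.2)
  invFun u := (u.1.2, u.1.1, u.2)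
  left_inv _ := rfl
  right_inv _ := rfl

set_option maxHeartbeats 2000000 in
lemma key_identity (τ : ℂ) (hτ : 0 < τ.im) (δ : ℤ) (hδ : δ = 0 ∨ δ = 1) (z w x : ℂ) :
    (∑' k : ℤ, T3 (τ/2) (z+w) δ k) * theta1 (z-w+x) τ * theta1 (z-w-x) τ
      - (∑' k : ℤ, T3 (τ/2) (z-w) δ k) * theta1 (z+w+x) τ * theta1 (z+w-x) τ
    = theta1 (2*z) τ * theta1 (-(2*w)) τ * (∑' k : ℤ, T3 (τ/2) x δ k) := by
  have hτ2 : 0 < (τ/2).im := by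
    have : (τ/2).im = τ.im / 2 := by
      rw [show τ/2 = τ * ((1:ℝ)/2 : ℂ) by push_cast; ring, Complex.mul_im]
      simp
      ring
    rw [this]
    linarith
  have P1 : (∑' k : ℤ, T3 (τ/2) (z+w) δ k) * (∑' p : ℤ × ℤ, DT τ (z-w+x) (z-w-x) p)
      = ∑' v : ℤ × ℤ × ℤ, T3 (τ/2) (z+w) δ v.1 * DT τ (z-w+x) (z-w-x) v.2 :=
    tsum_mul_tsum_of_summable_norm
      (summable_norm_iff.mpr (summable_T3 hτ2 (z+w) δ)) (summable_norm_iff.mpr (summable_DT hτ _ _))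
  have P2 : (∑' k : ℤ, T3 (τ/2) (z-w) δ k) * (∑' p : ℤ × ℤ, DT τ (z+w+x) (z+w-x) p)
      = ∑' v : ℤ × ℤ × ℤ, T3 (τ/2) (z-w) δ v.1 * DT τ (z+w+x) (z+w-x) v.2 :=
    tsum_mul_tsum_of_summable_norm
      (summable_norm_iff.mpr (summable_T3 hτ2 (z-w) δ)) (summable_norm_iff.mpr (summable_DT hτ _ _))
  have P3 : (∑' p : ℤ × ℤ, DT τ (2*z) (-(2*w)) p) * (∑' k : ℤ, T3 (τ/2) x δ k)
      = ∑' u : (ℤ × ℤ) × ℤ, DT τ (2*z) (-(2*w)) u.1 * T3 (τ/2) x δ u.2 :=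
    tsum_mul_tsum_of_summable_norm
      (summable_norm_iff.mpr (summable_DT hτ _ _)) (summable_norm_iff.mpr (summable_T3 hτ2 x δ))
  rw [mul_assoc, mul_assoc, prod_theta1 hτ (z-w+x) (z-w-x), prod_theta1 hτ (z+w+x) (z+w-x),
    prod_theta1 hτ (2*z) (-(2*w))]
  rw [P1, P2, P3]
  rw [← Equiv.tsum_eq e2 (fun v : ℤ × ℤ × ℤ => T3 (τ/2) (z-w) δ v.1 * DT τ (z+w+x) (z+w-x) v.2),
    ← Equiv.tsum_eq e3 (fun u : (ℤ × ℤ) × ℤ => DT τ (2*z) (-(2*w)) u.1 * T3 (τ/2) x δ u.2)]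
  have hs1 : Summable (fun v : ℤ × ℤ × ℤ => T3 (τ/2) (z+w) δ v.1 * DT τ (z-w+x) (z-w-x) v.2) :=
    summable_mul_of_summable_norm
      (summable_norm_iff.mpr (summable_T3 hτ2 (z+w) δ)) (summable_norm_iff.mpr (summable_DT hτ _ _))
  have hs2 : Summable (fun v : ℤ × ℤ × ℤ =>
      (fun v : ℤ × ℤ × ℤ => T3 (τ/2) (z-w) δ v.1 * DT τ (z+w+x) (z+w-x) v.2) (e2 v)) := by
    exact (Equiv.summable_iff e2).mpr (summable_mul_of_summable_norm
      (summable_norm_iff.mpr (summable_T3 hτ2 (z-w) δ)) (summable_norm_iff.mpr (summable_DT hτ _ _)))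
  rw [← Summable.tsum_sub hs1 hs2]
  refine tsum_congr fun v => ?_
  obtain ⟨k, r, s⟩ := v
  exact pointwise τ z w x δ k r s hδ

/-- key theta-function identity behind the contiguous relation. -/
theorem theta_contiguous_identity (τ : ℂ) (hτ : 0 < τ.im)
    (th : ℂ → ℂ → ℂ) (hth : th = theta3 ∨ th = theta4)
    (z x g η : ℂ) :
    th (z+g+η) (τ/2) * theta1 (z-η-g+x) τ * theta1 (z-η-g-x) τ
      - th (z-g-η) (τ/2) * theta1 (z+η+g+x) τ * theta1 (z+η+g-x) τ
    = theta1 (2*z) τ * theta1 (-2*g-2*η) τ * th x (τ/2) := by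
  rw [show z+g+η = z+(g+η) by ring, show z-g-η = z-(g+η) by ring,
    show z-η-g+x = z-(g+η)+x by ring, show z-η-g-x = z-(g+η)-x by ring,
    show z+η+g+x = z+(g+η)+x by ring, show z+η+g-x = z+(g+η)-x by ring,
    show -2*g-2*η = -(2*(g+η)) by ring]
  rcases hth with rfl | rfl
  · simp only [theta3_series]
    exact key_identity τ hτ 0 (Or.inl rfl) z (g+η) x
  · simp only [theta4_series]
    exact key_identity τ hτ 1 (Or.inr rfl) z (g+η) x
end
end

section
/- The coefficients α_ℓ^{(n)}(z) solve the recurrence generated by the contiguous relations: for every k ∈ {3,4}, every n ≥ 0, and every z ∈ ℂ such that θ₁(2z|τ) ≠ 0, all θ₁-factors in the denominators of α_ℓ^{(n+1)}(z), α_ℓ^{(n)}(z±η) are nonzero, and θ_k(z+(n+1−2ℓ)η|τ/2) ≠ 0, one has: (i) for 1 ≤ ℓ ≤ n, α_ℓ^{(n+1)}(z) = (c_A/θ₁(2z|τ)) · [θ_k(z+(n+1)η|τ/2) α_ℓ^{(n)}(z+η) + θ_k(z−(n+1)η|τ/2) α_{ℓ−1}^{(n)}(z−η)] / θ_k(z+(n+1−2ℓ)η|τ/2);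 (ii) α_0^{(n+1)}(z) = (c_A/θ₁(2z|τ)) α_0^{(n)}(z+η); (iii) α_{n+1}^{(n+1)}(z) = (c_A/θ₁(2z|τ)) α_n^{(n)}(z−η). -/
noncomputable section

open Complex BigOperators Finset

local notation "π" => (Real.pi : ℂ)

def cA (τ η : ℂ) : ℂ := Complex.exp (π*I*η) / Rfun τ

def cB (τ η : ℂ) : ℂ := Complex.exp (π*I*τ/2) / Rfun (2*η)

/-- Elliptic binomial coefficient [n choose l]_{τ,2η}. -/
def ebinom (τ η : ℂ) (n l : ℕ) : ℂ :=
  (∏ j ∈ Finset.range n, theta1 (2*η*((j:ℂ)+1)) τ) /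
  ((∏ j ∈ Finset.range l, theta1 (2*η*((j:ℂ)+1)) τ) *
   (∏ j ∈ Finset.range (n-l), theta1 (2*η*((j:ℂ)+1)) τ))

/-- Coefficient α_l^{(n)}(z). -/
def alphaC (τ η : ℂ) (n l : ℕ) (z : ℂ) : ℂ :=
  (cA τ η)^n * ebinom τ η n l *
    theta1 (2*z + 2*η*((n:ℂ) - 2*l)) τ /
    ∏ j ∈ Finset.range (n+1), theta1 (2*z - 2*η*((l:ℂ) - (j:ℂ))) τ

/-- term of θ₁ series -/
def t1term (σ z : ℂ) (n : ℤ) : ℂ :=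
  Complex.exp (π * I * σ * ((n : ℂ) + 1/2)^2 + 2 * π * I * ((n : ℂ) + 1/2) * (z + 1/2))

lemma summable_t1term {σ : ℂ} (hσ : 0 < σ.im) (z : ℂ) : Summable (t1term σ z) := by
  have h : Summable (jacobiTheta₂_term · (z + 1/2 + σ/2) σ) :=
    (summable_jacobiTheta₂_term_iff _ _).mpr hσ
  have h2 := h.mul_left (Complex.exp (π*I*σ/4 + π*I*(z+1/2)))
  refine h2.congr fun n => ?_
  rw [jacobiTheta₂_term, t1term, ← Complex.exp_add]
  congr 1
  ring

lemma hasSum_t1term {σ : ℂ} (hσ : 0 < σ.im) (z : ℂ) :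
    HasSum (t1term σ z) (-(theta1 z σ)) := by
  have : theta1 z σ = -∑' n : ℤ, t1term σ z n := by
    rw [theta1]
    congr 1
    refine tsum_congr fun n => ?_
    rw [t1term, ← Complex.exp_add]
    congr 1
    ring
  rw [this, neg_neg]
  exact (summable_t1term hσ z).hasSum

/-- "even" theta component -/
def Pf (σ w : ℂ) : ℂ := ∑' a : ℤ, Complex.exp (π*I*σ*(2*(a:ℂ))^2 + 2*π*I*(2*(a:ℂ))*w)

/-- "odd" theta component -/
def Qf (σ w : ℂ) : ℂ := ∑' a : ℤ, Complex.exp (π*I*σ*(2*(a:ℂ)+1)^2 + 2*π*I*(2*(a:ℂ)+1)*w)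

def pt (σ w : ℂ) (a : ℤ) : ℂ := Complex.exp (π*I*σ*(2*(a:ℂ))^2 + 2*π*I*(2*(a:ℂ))*w)
def qt (σ w : ℂ) (a : ℤ) : ℂ := Complex.exp (π*I*σ*(2*(a:ℂ)+1)^2 + 2*π*I*(2*(a:ℂ)+1)*w)

lemma summable_pt {σ : ℂ} (hσ : 0 < σ.im) (w : ℂ) : Summable (pt σ w) := by
  have h : Summable (jacobiTheta₂_term · (2*w) (4*σ)) := by
    refine (summable_jacobiTheta₂_term_iff _ _).mpr ?_
    simpa using by positivity
  refine h.congr fun a => ?_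
  rw [jacobiTheta₂_term, pt]
  congr 1
  ring

lemma summable_qt {σ : ℂ} (hσ : 0 < σ.im) (w : ℂ) : Summable (qt σ w) := by
  have h : Summable (jacobiTheta₂_term · (2*w + 2*σ) (4*σ)) := by
    refine (summable_jacobiTheta₂_term_iff _ _).mpr ?_
    simpa using by positivity
  have h2 := h.mul_left (Complex.exp (π*I*σ + 2*π*I*w))
  refine h2.congr fun a => ?_
  rw [jacobiTheta₂_term, qt, ← Complex.exp_add]
  congr 1
  ring

lemma hasSum_pt {σ : ℂ} (hσ : 0 < σ.im) (w : ℂ) : HasSum (pt σ w) (Pf σ w) :=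
  (summable_pt hσ w).hasSum

lemma hasSum_qt {σ : ℂ} (hσ : 0 < σ.im) (w : ℂ) : HasSum (qt σ w) (Qf σ w) :=
  (summable_qt hσ w).hasSum

lemma Pf_neg (σ w : ℂ) : Pf σ (-w) = Pf σ w := by
  rw [Pf, Pf, ← (Equiv.neg ℤ).tsum_eq]
  refine tsum_congr fun a => ?_
  simp only [Equiv.neg_apply]
  congr 1
  push_cast
  ring

lemma Qf_neg (σ w : ℂ) : Qf σ (-w) = Qf σ w := by
  rw [Qf, Qf, ← ((Equiv.neg ℤ).trans (Equiv.subRight (1:ℤ))).tsum_eq]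
  refine tsum_congr fun a => ?_
  simp only [Equiv.trans_apply, Equiv.neg_apply, Equiv.subRight_apply]
  congr 1
  push_cast
  ring
lemma Pf_half (σ w : ℂ) : Pf σ (w + 1/2) = Pf σ w := by
  refine tsum_congr fun a => ?_
  have : π*I*σ*(2*(a:ℂ))^2 + 2*π*I*(2*(a:ℂ))*(w+1/2)
       = (π*I*σ*(2*(a:ℂ))^2 + 2*π*I*(2*(a:ℂ))*w) + (a:ℂ)*(2*π*I) := by ring
  rw [this, Complex.exp_add, Complex.exp_int_mul_two_pi_mul_I, mul_one]

lemma exp_odd_pi (a : ℤ) : Complex.exp ((a:ℂ)*(2*π*I) + π*I) = -1 := by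
  rw [Complex.exp_add, Complex.exp_int_mul_two_pi_mul_I, Complex.exp_pi_mul_I, one_mul]

lemma Qf_half (σ w : ℂ) : Qf σ (w + 1/2) = -Qf σ w := by
  rw [Qf, Qf, ← tsum_neg]
  refine tsum_congr fun a => ?_
  have h : π*I*σ*(2*(a:ℂ)+1)^2 + 2*π*I*(2*(a:ℂ)+1)*(w+1/2)
       = (π*I*σ*(2*(a:ℂ)+1)^2 + 2*π*I*(2*(a:ℂ)+1)*w) + ((a:ℂ)*(2*π*I) + π*I) := by ring
  rw [h, Complex.exp_add, exp_odd_pi, mul_neg_one]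

/-- θ₃ as a plain series. -/
lemma theta3_series_s6 (z σ : ℂ) :
    theta3 z σ = ∑' m : ℤ, Complex.exp (π*I*σ*(m:ℂ)^2 + 2*π*I*(m:ℂ)*z) := by
  rw [theta3, theta2, theta1, mul_neg, ← tsum_mul_left, ← tsum_neg,
    ← (Equiv.addRight (1:ℤ)).tsum_eq (fun m : ℤ => Complex.exp (π*I*σ*(m:ℂ)^2 + 2*π*I*(m:ℂ)*z))]
  refine tsum_congr fun n => ?_
  simp only [Equiv.coe_addRight]
  rw [← Complex.exp_add, ← Complex.exp_add]
  have h : π*I*σ/4 + π*I*z + (π*I*((n:ℂ)+1/2)^2*σ + 2*π*I*((n:ℂ)+1/2)*(z+σ/2+1/2+1/2))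
      = (π*I*σ*(((n+1:ℤ)):ℂ)^2 + 2*π*I*(((n+1:ℤ)):ℂ)*z) + ((n:ℂ)*(2*π*I) + π*I) := by
    push_cast; ring
  rw [h, Complex.exp_add, exp_odd_pi, mul_neg_one, neg_neg]
lemma hasSum_sum_elim {β γ : Type*} {f : β → ℂ} {g : γ → ℂ} {a b : ℂ}
    (hf : HasSum f a) (hg : HasSum g b) : HasSum (Sum.elim f g) (a + b) := by
  refine HasSum.add_isCompl Set.isCompl_range_inl_range_inr ?_ ?_
  · have := ((Equiv.ofInjective Sum.inl Sum.inl_injective).hasSum_iff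
      (f := (Sum.elim f g : β ⊕ γ → ℂ) ∘ (Subtype.val : Set.range Sum.inl → β ⊕ γ)) (a := a)).mp
    apply this
    exact hf.congr_fun fun x => rfl
  · have := ((Equiv.ofInjective Sum.inr Sum.inr_injective).hasSum_iff
      (f := (Sum.elim f g : β ⊕ γ → ℂ) ∘ (Subtype.val : Set.range Sum.inr → β ⊕ γ)) (a := b)).mp
    apply this
    exact hg.congr_fun fun x => rfl

/-- even/odd split equiv -/
def evenOdd : ℤ ⊕ ℤ ≃ ℤ where
  toFun := Sum.elim (fun a => 2*a) (fun a => 2*a+1)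
  invFun n := if 2 ∣ n then Sum.inl (n/2) else Sum.inr (n/2)
  left_inv := by
    rintro (a|a)
    · simp only [Sum.elim_inl]
      show (if 2 ∣ 2*a then Sum.inl (2*a/2) else Sum.inr (2*a/2)) = _
      rw [if_pos (dvd_mul_right 2 a)]
      congr 1; omega
    · simp only [Sum.elim_inr]
      show (if 2 ∣ 2*a+1 then Sum.inl ((2*a+1)/2) else Sum.inr ((2*a+1)/2)) = _
      rw [if_neg (by omega)]
      congr 1; omega
  right_inv := by
    intro n
    by_cases h : 2 ∣ n
    · show Sum.elim _ _ (if 2 ∣ n then Sum.inl (n / 2) else Sum.inr (n / 2)) = n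
      rw [if_pos h]; simp only [Sum.elim_inl]; omega
    · show Sum.elim _ _ (if 2 ∣ n then Sum.inl (n / 2) else Sum.inr (n / 2)) = n
      rw [if_neg h]; simp only [Sum.elim_inr]; omega

lemma theta3_PQ {σ : ℂ} (hσ : 0 < σ.im) (z : ℂ) : theta3 z σ = Pf σ z + Qf σ z := by
  have hl : HasSum (fun a : ℤ =>
      Complex.exp (π*I*σ*((2*a:ℤ):ℂ)^2 + 2*π*I*((2*a:ℤ):ℂ)*z)) (Pf σ z) := by
    refine (hasSum_pt hσ z).congr_fun fun a => ?_
    rw [pt]; congr 2 <;> push_cast <;> ring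
  have hr : HasSum (fun a : ℤ =>
      Complex.exp (π*I*σ*((2*a+1:ℤ):ℂ)^2 + 2*π*I*((2*a+1:ℤ):ℂ)*z)) (Qf σ z) := by
    refine (hasSum_qt hσ z).congr_fun fun a => ?_
    rw [qt]; congr 2 <;> push_cast <;> ring
  have hs : HasSum (fun m : ℤ => Complex.exp (π*I*σ*(m:ℂ)^2 + 2*π*I*(m:ℂ)*z)) (Pf σ z + Qf σ z) := by
    rw [← Equiv.hasSum_iff evenOdd]
    refine (hasSum_sum_elim hl hr).congr_fun fun x => ?_
    rcases x with a | a <;> rfl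
  rw [theta3_series_s6, hs.tsum_eq]

lemma theta4_PQ {σ : ℂ} (hσ : 0 < σ.im) (z : ℂ) : theta4 z σ = Pf σ z - Qf σ z := by
  rw [theta4, theta3_PQ hσ, Pf_half, Qf_half, sub_eq_add_neg]
/-- pairing equiv for the double sum -/
def pairEq : (ℤ × ℤ) ⊕ (ℤ × ℤ) ≃ ℤ × ℤ where
  toFun := Sum.elim (fun p => (p.1 + p.2, p.1 - p.2 - 1)) (fun p => (p.1 + p.2, p.1 - p.2))
  invFun q := if 2 ∣ (q.1 + q.2) then Sum.inr ((q.1+q.2)/2, (q.1-q.2)/2)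
              else Sum.inl ((q.1+q.2+1)/2, (q.1-q.2-1)/2)
  left_inv := by
    rintro (⟨a,b⟩|⟨a,b⟩)
    · show (if 2 ∣ (a+b+(a-b-1)) then _ else Sum.inl ((a+b+(a-b-1)+1)/2, (a+b-(a-b-1)-1)/2)) = _
      rw [if_neg (by omega)]
      simp only [Sum.inl.injEq, Prod.mk.injEq]
      constructor <;> omega
    · show (if 2 ∣ (a+b+(a-b)) then Sum.inr ((a+b+(a-b))/2, (a+b-(a-b))/2) else _) = _
      rw [if_pos (by omega)]
      simp only [Sum.inr.injEq, Prod.mk.injEq]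
      constructor <;> omega
  right_inv := by
    rintro ⟨m,n⟩
    by_cases h : 2 ∣ (m+n)
    · show Sum.elim _ _ (if 2 ∣ (m+n) then Sum.inr ((m+n)/2, (m-n)/2) else _) = _
      rw [if_pos h]
      show ((m+n)/2 + (m-n)/2, (m+n)/2 - (m-n)/2) = (m, n)
      have : (2:ℤ) ∣ (m - n) := by omega
      congr 1 <;> omega
    · show Sum.elim _ _ (if 2 ∣ (m+n) then _ else Sum.inl ((m+n+1)/2, (m-n-1)/2)) = _
      rw [if_neg h]
      show ((m+n+1)/2 + (m-n-1)/2, (m+n+1)/2 - (m-n-1)/2 - 1) = (m, n)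
      congr 1 <;> omega

lemma theta1_mul {σ : ℂ} (hσ : 0 < σ.im) (A B s d : ℂ)
    (hs : A + B = 2*s) (hd : A - B = 2*d) :
    theta1 A (2*σ) * theta1 B (2*σ) = Pf σ s * Qf σ d - Qf σ s * Pf σ d := by
  have h2σ : 0 < (2*σ).im := by simpa using by positivity
  have hA := hasSum_t1term h2σ A
  have hB := hasSum_t1term h2σ B
  have hnA : Summable fun n => ‖t1term (2*σ) A n‖ :=
    summable_norm_iff.mpr (summable_t1term h2σ A)
  have hnB : Summable fun n => ‖t1term (2*σ) B n‖ :=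
    summable_norm_iff.mpr (summable_t1term h2σ B)
  have hprod : HasSum (fun q : ℤ × ℤ => t1term (2*σ) A q.1 * t1term (2*σ) B q.2)
      (theta1 A (2*σ) * theta1 B (2*σ)) := by
    have := hA.mul hB (summable_mul_of_summable_norm hnA hnB)
    simpa [neg_mul_neg] using this
  -- left piece: (a,b) ↦ pt a s * qt b d
  have hl : HasSum (fun p : ℤ × ℤ => pt σ s p.1 * qt σ d p.2) (Pf σ s * Qf σ d) := by
    refine (hasSum_pt hσ s).mul (hasSum_qt hσ d) ?_
    exact summable_mul_of_summable_norm
      (summable_norm_iff.mpr (summable_pt hσ s)) (summable_norm_iff.mpr (summable_qt hσ d))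
  have hr : HasSum (fun p : ℤ × ℤ => qt σ s p.1 * pt σ d p.2) (Qf σ s * Pf σ d) := by
    refine (hasSum_qt hσ s).mul (hasSum_pt hσ d) ?_
    exact summable_mul_of_summable_norm
      (summable_norm_iff.mpr (summable_qt hσ s)) (summable_norm_iff.mpr (summable_pt hσ d))
  have key : HasSum ((fun q : ℤ × ℤ => t1term (2*σ) A q.1 * t1term (2*σ) B q.2) ∘ pairEq)
      (Pf σ s * Qf σ d + -(Qf σ s * Pf σ d)) := by
    refine (hasSum_sum_elim hl hr.neg).congr_fun fun x => ?_
    rcases x with ⟨a,b⟩ | ⟨a,b⟩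
    · show t1term (2*σ) A (a+b) * t1term (2*σ) B (a-b-1) = pt σ s a * qt σ d b
      rw [pt, qt, t1term, t1term, ← Complex.exp_add, ← Complex.exp_add]
      have he : π*I*(2*σ)*(((a+b:ℤ):ℂ) + 1/2)^2 + 2*π*I*(((a+b:ℤ):ℂ)+1/2)*(A+1/2)
          + (π*I*(2*σ)*(((a-b-1:ℤ):ℂ) + 1/2)^2 + 2*π*I*(((a-b-1:ℤ):ℂ)+1/2)*(B+1/2))
          = (π*I*σ*(2*(a:ℂ))^2 + 2*π*I*(2*(a:ℂ))*s) + (π*I*σ*(2*(b:ℂ)+1)^2 + 2*π*I*(2*(b:ℂ)+1)*d)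
            + (a:ℂ)*(2*π*I) := by
        push_cast
        have hA' : A = s + d := by linear_combination (hs + hd)/2
        have hB' : B = s - d := by linear_combination (hs - hd)/2
        rw [hA', hB']; ring
      rw [he, Complex.exp_add, Complex.exp_int_mul_two_pi_mul_I, mul_one]
    · show t1term (2*σ) A (a+b) * t1term (2*σ) B (a-b) = -(qt σ s a * pt σ d b)
      rw [pt, qt, t1term, t1term, ← Complex.exp_add, ← Complex.exp_add]
      have he : π*I*(2*σ)*(((a+b:ℤ):ℂ) + 1/2)^2 + 2*π*I*(((a+b:ℤ):ℂ)+1/2)*(A+1/2)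
          + (π*I*(2*σ)*(((a-b:ℤ):ℂ) + 1/2)^2 + 2*π*I*(((a-b:ℤ):ℂ)+1/2)*(B+1/2))
          = (π*I*σ*(2*(a:ℂ)+1)^2 + 2*π*I*(2*(a:ℂ)+1)*s) + (π*I*σ*(2*(b:ℂ))^2 + 2*π*I*(2*(b:ℂ))*d)
            + ((a:ℂ)*(2*π*I) + π*I) := by
        push_cast
        have hA' : A = s + d := by linear_combination (hs + hd)/2
        have hB' : B = s - d := by linear_combination (hs - hd)/2
        rw [hA', hB']; ring
      rw [he, Complex.exp_add, exp_odd_pi, mul_neg_one]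
  have := (Equiv.hasSum_iff pairEq).mp key
  have := hprod.unique this
  rw [this]; ring
/-- The fundamental three-term theta identity behind the contiguous relations. -/
lemma core_identity (th : ℂ → ℂ → ℂ) (hth : th = theta3 ∨ th = theta4)
    {σ : ℂ} (hσ : 0 < σ.im) (z u v : ℂ) :
    th (z + (u+v)) σ * (theta1 (2*v) (2*σ) * theta1 (2*z - 2*u) (2*σ))
      + th (z - (u+v)) σ * (theta1 (2*u) (2*σ) * theta1 (2*z + 2*v) (2*σ))
      = th (z + (v-u)) σ * (theta1 (2*(u+v)) (2*σ) * theta1 (2*z) (2*σ)) := by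
  rw [theta1_mul hσ (2*v) (2*z - 2*u) (z + (v-u)) (-(z - (u+v))) (by ring) (by ring),
      theta1_mul hσ (2*u) (2*z + 2*v) (z + (u+v)) (-(z + (v-u))) (by ring) (by ring),
      theta1_mul hσ (2*(u+v)) (2*z) (z + (u+v)) (-(z - (u+v))) (by ring) (by ring),
      ]
  simp only [Pf_neg, Qf_neg]
  rcases hth with h | h <;> subst h <;>
    simp only [theta3_PQ hσ, theta4_PQ hσ] <;> ring

lemma ebinom_rec1 (τ η : ℂ) (n l : ℕ) (hl : l ≤ n)
    (h1 : (∏ j ∈ Finset.range l, theta1 (2*η*((j:ℂ)+1)) τ) ≠ 0)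
    (h2 : (∏ j ∈ Finset.range (n-l), theta1 (2*η*((j:ℂ)+1)) τ) ≠ 0)
    (h3 : theta1 (2*η*((n:ℂ)+1)) τ ≠ 0)
    (h4 : theta1 (2*η*((n:ℂ)+1-(l:ℂ))) τ ≠ 0) :
    ebinom τ η n l = ebinom τ η (n+1) l * theta1 (2*η*((n:ℂ)+1-(l:ℂ))) τ
      / theta1 (2*η*((n:ℂ)+1)) τ := by
  rw [ebinom, ebinom, show n+1-l = (n-l)+1 from by omega,
    Finset.prod_range_succ, Finset.prod_range_succ,
    show ((((n-l:ℕ)):ℂ))+1 = (n:ℂ)+1-(l:ℂ) from by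
      rw [Nat.cast_sub (by omega : l ≤ n)]; ring]
  set Bn := ∏ j ∈ Finset.range n, theta1 (2*η*((j:ℂ)+1)) τ with hBn
  set Bl := ∏ j ∈ Finset.range l, theta1 (2*η*((j:ℂ)+1)) τ with hBl
  set Bm := ∏ j ∈ Finset.range (n-l), theta1 (2*η*((j:ℂ)+1)) τ with hBm
  set t1 := theta1 (2*η*((n:ℂ)+1)) τ with ht1
  set t2 := theta1 (2*η*((n:ℂ)+1-(l:ℂ))) τ with ht2
  field_simp

lemma ebinom_rec2 (τ η : ℂ) (n l : ℕ) (hl1 : 1 ≤ l) (hl : l ≤ n+1)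
    (h1 : (∏ j ∈ Finset.range (l-1), theta1 (2*η*((j:ℂ)+1)) τ) ≠ 0)
    (h2 : (∏ j ∈ Finset.range (n+1-l), theta1 (2*η*((j:ℂ)+1)) τ) ≠ 0)
    (h3 : theta1 (2*η*((n:ℂ)+1)) τ ≠ 0)
    (h4 : theta1 (2*η*(l:ℂ)) τ ≠ 0) :
    ebinom τ η n (l-1) = ebinom τ η (n+1) l * theta1 (2*η*(l:ℂ)) τ
      / theta1 (2*η*((n:ℂ)+1)) τ := by
  obtain ⟨k, rfl⟩ : ∃ k, l = k+1 := ⟨l-1, by omega⟩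
  simp only [Nat.add_sub_cancel] at h1 h2 ⊢
  rw [show ((((k+1:ℕ)):ℂ)) = ((k:ℕ):ℂ)+1 from by push_cast; ring] at h4
  rw [ebinom, ebinom, show n-k = n+1-(k+1) from by omega,
    Finset.prod_range_succ, Finset.prod_range_succ,
    show ((((k+1:ℕ)):ℂ)) = ((k:ℕ):ℂ)+1 from by push_cast; ring]
  set Bn := ∏ j ∈ Finset.range n, theta1 (2*η*((j:ℂ)+1)) τ with hBn
  set Bl := ∏ j ∈ Finset.range k, theta1 (2*η*((j:ℂ)+1)) τ with hBl
  set Bm := ∏ j ∈ Finset.range (n+1-(k+1)), theta1 (2*η*((j:ℂ)+1)) τ with hBm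
  set t1 := theta1 (2*η*((n:ℂ)+1)) τ with ht1
  set t2 := theta1 (2*η*((k:ℂ)+1)) τ with ht2
  field_simp

set_option maxHeartbeats 2000000 in
/-- the coefficients α_l^{(n)} solve the recurrence of the contiguous relations. -/
theorem alpha_recurrence (τ η : ℂ) (hτ : 0 < τ.im) (hη : 0 < η.im)
    (th : ℂ → ℂ → ℂ) (hth : th = theta3 ∨ th = theta4)
    (n : ℕ) (z : ℂ) (hz : theta1 (2*z) τ ≠ 0)
    (hden : ∀ a : ℤ, -((n:ℤ)+1) ≤ a → a ≤ (n:ℤ)+1 →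
        theta1 (2*z - 2*η*(a:ℂ)) τ ≠ 0 ∧ theta1 (2*(z+η) - 2*η*(a:ℂ)) τ ≠ 0 ∧
        theta1 (2*(z-η) - 2*η*(a:ℂ)) τ ≠ 0)
    (hbin : ∀ j : ℕ, 1 ≤ j → j ≤ n+1 → theta1 (2*η*(j:ℂ)) τ ≠ 0) :
    (∀ l : ℕ, 1 ≤ l → l ≤ n → th (z + ((n:ℂ)+1-2*l)*η) (τ/2) ≠ 0 →
      alphaC τ η (n+1) l z = cA τ η / theta1 (2*z) τ *
        ((th (z + ((n:ℂ)+1)*η) (τ/2) * alphaC τ η n l (z+η)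
          + th (z - ((n:ℂ)+1)*η) (τ/2) * alphaC τ η n (l-1) (z-η)) /
         th (z + ((n:ℂ)+1-2*l)*η) (τ/2))) ∧
    alphaC τ η (n+1) 0 z = cA τ η / theta1 (2*z) τ * alphaC τ η n 0 (z+η) ∧
    alphaC τ η (n+1) (n+1) z = cA τ η / theta1 (2*z) τ * alphaC τ η n n (z-η) := by
  have hB : ∀ m : ℕ, m ≤ n+1 → (∏ j ∈ Finset.range m, theta1 (2*η*((j:ℂ)+1)) τ) ≠ 0 := by
    intro m hm
    refine Finset.prod_ne_zero_iff.mpr fun j hj => ?_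
    have hj' := Finset.mem_range.mp hj
    have := hbin (j+1) (by omega) (by omega)
    rwa [show ((j+1:ℕ):ℂ) = (j:ℂ)+1 from by push_cast; ring] at this
  refine ⟨?_, ?_, ?_⟩
  · intro l hl1 hln hk
    have hτ2 : 0 < (τ/2).im := by
      have h2 : (τ/2).im = τ.im/2 := by
        rw [show τ/2 = τ*(1/2) from by ring, Complex.mul_im]
        norm_num
        ring
      rw [h2]; positivity
    have hθN : theta1 (2*η*((n:ℂ)+1)) τ ≠ 0 := by
      have := hbin (n+1) (by omega) le_rfl
      rwa [show (((n+1:ℕ)):ℂ) = (n:ℂ)+1 from by push_cast; ring] at this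
    have hθb : theta1 (2*η*((n:ℂ)+1-(l:ℂ))) τ ≠ 0 := by
      have := hbin (n+1-l) (by omega) (by omega)
      rwa [show (((n+1-l:ℕ)):ℂ) = (n:ℂ)+1-(l:ℂ) from by
        rw [Nat.cast_sub (by omega : l ≤ n+1)]; push_cast; ring] at this
    have hθl : theta1 (2*η*(l:ℂ)) τ ≠ 0 := hbin l hl1 (by omega)
    have hθl' : theta1 (2*z-2*η*(l:ℂ)) τ ≠ 0 := by
      have := (hden (l:ℤ) (by omega) (by omega)).1
      rwa [show ((((l:ℤ)):ℤ):ℂ) = (l:ℂ) from by push_cast; ring] at this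
    have hθb' : theta1 (2*z+2*η*((n:ℂ)+1-(l:ℂ))) τ ≠ 0 := by
      have := (hden ((l:ℤ)-((n:ℤ)+1)) (by omega) (by omega)).1
      rwa [show 2*z - 2*η*(((((l:ℤ)-((n:ℤ)+1)):ℤ)):ℂ) = 2*z+2*η*((n:ℂ)+1-(l:ℂ)) from by
        push_cast; ring] at this
    have hPD : (∏ j ∈ Finset.range (n+1+1), theta1 (2*z - 2*η*((l:ℂ) - (j:ℂ))) τ) ≠ 0 := by
      refine Finset.prod_ne_zero_iff.mpr fun j hj => ?_
      have hj' := Finset.mem_range.mp hj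
      have := (hden ((l:ℤ)-(j:ℤ)) (by omega) (by omega)).1
      rwa [show ((((l:ℤ)-(j:ℤ)):ℤ):ℂ) = (l:ℂ)-(j:ℂ) from by push_cast; ring] at this
    have r1 := ebinom_rec1 τ η n l hln (hB l (by omega)) (hB (n-l) (by omega)) hθN hθb
    have r2 := ebinom_rec2 τ η n l hl1 (by omega) (hB (l-1) (by omega)) (hB (n+1-l) (by omega)) hθN hθl
    have dD1 : (∏ j ∈ Finset.range (n+1), theta1 (2*(z+η) - 2*η*((l:ℂ) - (j:ℂ))) τ)
        * theta1 (2*z-2*η*(l:ℂ)) τ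
        = ∏ j ∈ Finset.range (n+1+1), theta1 (2*z - 2*η*((l:ℂ) - (j:ℂ))) τ := by
      conv_rhs => rw [Finset.prod_range_succ']
      congr 1
      · exact Finset.prod_congr rfl fun j _ => by congr 1; push_cast; ring
      · congr 1; push_cast; ring
    have dD2 : (∏ j ∈ Finset.range (n+1), theta1 (2*(z-η) - 2*η*((((l-1:ℕ)):ℂ) - (j:ℂ))) τ)
        * theta1 (2*z+2*η*((n:ℂ)+1-(l:ℂ))) τ
        = ∏ j ∈ Finset.range (n+1+1), theta1 (2*z - 2*η*((l:ℂ) - (j:ℂ))) τ := by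
      conv_rhs => rw [Finset.prod_range_succ]
      congr 1
      · exact Finset.prod_congr rfl fun j _ => by
          congr 1; rw [Nat.cast_sub hl1]; push_cast; ring
      · congr 1; push_cast; ring
    have hcore := core_identity th hth hτ2 z ((l:ℂ)*η) (((n:ℂ)+1-(l:ℂ))*η)
    rw [show (2:ℂ)*(τ/2) = τ from by ring] at hcore
    rw [show z + ((l:ℂ)*η + ((n:ℂ)+1-(l:ℂ))*η) = z + ((n:ℂ)+1)*η from by ring,
        show z - ((l:ℂ)*η + ((n:ℂ)+1-(l:ℂ))*η) = z - ((n:ℂ)+1)*η from by ring,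
        show z + (((n:ℂ)+1-(l:ℂ))*η - (l:ℂ)*η) = z + ((n:ℂ)+1-2*(l:ℂ))*η from by ring,
        show 2*z - 2*((l:ℂ)*η) = 2*z - 2*η*(l:ℂ) from by ring,
        show 2*z + 2*(((n:ℂ)+1-(l:ℂ))*η) = 2*z + 2*η*((n:ℂ)+1-(l:ℂ)) from by ring,
        show 2*(((n:ℂ)+1-(l:ℂ))*η) = 2*η*((n:ℂ)+1-(l:ℂ)) from by ring,
        show 2*((l:ℂ)*η) = 2*η*(l:ℂ) from by ring,
        show 2*((l:ℂ)*η + ((n:ℂ)+1-(l:ℂ))*η) = 2*η*((n:ℂ)+1) from by ring] at hcore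
    simp only [alphaC]
    rw [show (((n+1:ℕ)):ℂ) = (n:ℂ)+1 from by push_cast; ring,
        show 2*(z+η) + 2*η*((n:ℂ) - 2*(l:ℂ)) = 2*z + 2*η*((n:ℂ)+1-2*(l:ℂ)) from by ring,
        show 2*(z-η) + 2*η*((n:ℂ) - 2*(((l-1:ℕ)):ℂ)) = 2*z + 2*η*((n:ℂ)+1-2*(l:ℂ)) from by
          rw [Nat.cast_sub hl1]; push_cast; ring,
        show 2*z + 2*η*((n:ℂ)+1 - 2*(l:ℂ)) = 2*z + 2*η*((n:ℂ)+1-2*(l:ℂ)) from by ring]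
    rw [r1, r2, (eq_div_iff hθl').mpr dD1, (eq_div_iff hθb').mpr dD2]
    set A := theta1 (2*z+2*η*((n:ℂ)+1-2*(l:ℂ))) τ
    set P := ∏ j ∈ Finset.range (n+1+1), theta1 (2*z-2*η*((l:ℂ)-(j:ℂ))) τ
    set T1 := theta1 (2*z-2*η*(l:ℂ)) τ
    set T2 := theta1 (2*z+2*η*((n:ℂ)+1-(l:ℂ))) τ
    set T3 := theta1 (2*η*((n:ℂ)+1)) τ
    set T4 := theta1 (2*η*((n:ℂ)+1-(l:ℂ))) τ
    set T5 := theta1 (2*η*(l:ℂ)) τ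
    set T6 := theta1 (2*z) τ
    set H1 := th (z + ((n:ℂ)+1)*η) (τ/2)
    set H2 := th (z - ((n:ℂ)+1)*η) (τ/2)
    set H3 := th (z + ((n:ℂ)+1-2*l)*η) (τ/2)
    field_simp
    linear_combination (-(cA τ η * cA τ η ^ n) * ebinom τ η (n+1) l *
      theta1 (2*z+2*η*((n:ℂ)+1-2*(l:ℂ))) τ) * hcore
  · -- l = 0 case
    have e1 : ebinom τ η (n+1) 0 = 1 := by
      rw [ebinom, Finset.prod_range_zero, one_mul, Nat.sub_zero]
      exact div_self (hB (n+1) le_rfl)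
    have e0 : ebinom τ η n 0 = 1 := by
      rw [ebinom, Finset.prod_range_zero, one_mul, Nat.sub_zero]
      exact div_self (hB n (by omega))
    simp only [alphaC, e1, e0]
    rw [show (2*z + 2*η*((((n+1:ℕ)):ℂ) - 2*(((0:ℕ)):ℂ))) = 2*z + 2*η*((n:ℂ)+1) from by push_cast; ring,
        show (2*(z+η) + 2*η*((n:ℂ) - 2*(((0:ℕ)):ℂ))) = 2*z + 2*η*((n:ℂ)+1) from by push_cast; ring]
    rw [Finset.prod_range_succ']
    rw [show theta1 (2*z - 2*η*(((0:ℕ):ℂ) - ((0:ℕ):ℂ))) τ = theta1 (2*z) τ from by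
          congr 1; push_cast; ring]
    rw [Finset.prod_congr rfl (fun j _ => show
          theta1 (2*z - 2*η*(((0:ℕ):ℂ) - (((j+1:ℕ)):ℂ))) τ
        = theta1 (2*(z+η) - 2*η*(((0:ℕ):ℂ) - ((j:ℕ):ℂ))) τ from by congr 1; push_cast; ring)]
    field_simp
    ring
  · -- l = n+1 case
    have e1 : ebinom τ η (n+1) (n+1) = 1 := by
      rw [ebinom, Nat.sub_self, Finset.prod_range_zero, mul_one]
      exact div_self (hB (n+1) le_rfl)
    have e0 : ebinom τ η n n = 1 := by
      rw [ebinom, Nat.sub_self, Finset.prod_range_zero, mul_one]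
      exact div_self (hB n (by omega))
    simp only [alphaC, e1, e0]
    rw [show (2*z + 2*η*((((n+1:ℕ)):ℂ) - 2*(((n+1:ℕ)):ℂ))) = 2*(z-η) + 2*η*((n:ℂ) - 2*(n:ℂ)) from by
          push_cast; ring]
    rw [Finset.prod_range_succ]
    rw [show theta1 (2*z - 2*η*((((n+1:ℕ)):ℂ) - (((n+1:ℕ)):ℂ))) τ = theta1 (2*z) τ from by
          congr 1; push_cast; ring]
    rw [Finset.prod_congr rfl (fun j _ => show
          theta1 (2*z - 2*η*((((n+1:ℕ)):ℂ) - ((j:ℕ):ℂ))) τ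
        = theta1 (2*(z-η) - 2*η*(((n:ℕ):ℂ) - ((j:ℕ):ℂ))) τ from by congr 1; push_cast; ring)]
    field_simp
    ring
end
end

section
/- Zero modes of the intertwiner on the lattice g = nη: for every integer n ≥ 1, every 0 ≤ j ≤ n−1, and every z ∈ ℂ such that θ₁(2z+2ηr|τ) ≠ 0 for all integers r with |r| ≤ n, one has ∑_{ℓ=0}^{n} (−1)^ℓ α_ℓ^{(n)}(z) · θ₃(z+(n−2ℓ)η|τ/2)^j · θ₄(z+(n−2ℓ)η|τ/2)^{n−1−j} = 0. -/
noncomputable section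

open Complex BigOperators Finset

local notation "π" => (Real.pi : ℂ)

lemma cexp_eq_neg_of (A B : ℂ) (h : A = B + π * I) : Complex.exp A = -Complex.exp B := by
  rw [h, Complex.exp_add, Complex.exp_pi_mul_I]; ring

lemma theta1_term_eq (z σ : ℂ) (n : ℤ) :
    Complex.exp (π * I * ((n : ℂ) + 1/2)^2 * σ) *
      Complex.exp (2 * π * I * ((n : ℂ) + 1/2) * (z + 1/2)) =
    Complex.exp (π * I * σ / 4 + π * I * (z + 1/2)) *
      jacobiTheta₂_term n (z + 1/2 + σ/2) σ := by
  rw [jacobiTheta₂_term, ← Complex.exp_add, ← Complex.exp_add]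
  congr 1
  ring

lemma theta1_eq (z σ : ℂ) :
    theta1 z σ = -(Complex.exp (π * I * σ / 4 + π * I * (z + 1/2)) *
      jacobiTheta₂ (z + 1/2 + σ/2) σ) := by
  rw [theta1, jacobiTheta₂, ← tsum_mul_left]
  congr 1
  exact tsum_congr fun n => theta1_term_eq z σ n

lemma theta1_hasSum {σ : ℂ} (hσ : 0 < σ.im) (z : ℂ) :
    HasSum (fun n : ℤ => Complex.exp (π * I * ((n : ℂ) + 1/2)^2 * σ) *
      Complex.exp (2 * π * I * ((n : ℂ) + 1/2) * (z + 1/2))) (-theta1 z σ) := by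
  rw [theta1_eq, neg_neg]
  have h := (hasSum_jacobiTheta₂_term (z + 1/2 + σ/2) hσ).mul_left
    (Complex.exp (π * I * σ / 4 + π * I * (z + 1/2)))
  exact h.congr_fun fun n => (theta1_term_eq z σ n)

lemma theta1_add_one (z σ : ℂ) : theta1 (z + 1) σ = -theta1 z σ := by
  rw [theta1_eq, theta1_eq]
  have h1 : z + 1 + 1/2 + σ/2 = (z + 1/2 + σ/2) + 1 := by ring
  rw [h1, jacobiTheta₂_add_left]
  have h2 : Complex.exp (π * I * σ / 4 + π * I * (z + 1 + 1/2)) =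
      -Complex.exp (π * I * σ / 4 + π * I * (z + 1/2)) :=
    cexp_eq_neg_of _ _ (by ring)
  rw [h2]; ring

lemma theta1_neg (z σ : ℂ) : theta1 (-z) σ = -theta1 z σ := by
  rw [theta1_eq, theta1_eq]
  have h1 : jacobiTheta₂ (-z + 1/2 + σ/2) σ = jacobiTheta₂ (z + 1/2 + σ/2 - 1 - σ) σ := by
    rw [← jacobiTheta₂_neg_left]; congr 1; ring
  have h2 : jacobiTheta₂ (z + 1/2 + σ/2 - 1 - σ) σ = jacobiTheta₂ (z + 1/2 + σ/2 - σ) σ := by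
    rw [← jacobiTheta₂_add_left (z + 1/2 + σ/2 - 1 - σ) σ]; congr 1; ring
  have h3 : jacobiTheta₂ (z + 1/2 + σ/2) σ =
      Complex.exp (-π * I * (σ + 2 * (z + 1/2 + σ/2 - σ))) *
        jacobiTheta₂ (z + 1/2 + σ/2 - σ) σ := by
    rw [← jacobiTheta₂_add_left' (z + 1/2 + σ/2 - σ) σ]; congr 1; ring
  rw [h1, h2, h3]
  have h4 : Complex.exp (π * I * σ / 4 + π * I * (-z + 1/2)) =
      -(Complex.exp (π * I * σ / 4 + π * I * (z + 1/2)) *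
        Complex.exp (-π * I * (σ + 2 * (z + 1/2 + σ/2 - σ)))) := by
    rw [← Complex.exp_add]
    exact cexp_eq_neg_of _ _ (by ring)
  rw [h4]; ring

lemma theta3_eq (z σ : ℂ) : theta3 z σ = jacobiTheta₂ z σ := by
  rw [theta3, theta2, theta1_eq]
  have h1 : jacobiTheta₂ (z + σ/2 + 1/2 + 1/2 + σ/2) σ = jacobiTheta₂ (z + σ) σ := by
    rw [← jacobiTheta₂_add_left (z + σ) σ]; congr 1; ring
  have h2 : jacobiTheta₂ (z + σ) σ = Complex.exp (-π * I * (σ + 2 * z)) * jacobiTheta₂ z σ :=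
    jacobiTheta₂_add_left' z σ
  rw [h1, h2]
  have h3 : Complex.exp (π * I * σ / 4 + π * I * z) *
      -(Complex.exp (π * I * σ / 4 + π * I * (z + σ/2 + 1/2 + 1/2)) *
        (Complex.exp (-π * I * (σ + 2 * z)) * jacobiTheta₂ z σ)) =
      (-(Complex.exp ((π * I * σ / 4 + π * I * z) + (π * I * σ / 4 + π * I * (z + σ/2 + 1/2 + 1/2))
        + (-π * I * (σ + 2 * z))))) * jacobiTheta₂ z σ := by
    have e : Complex.exp ((π * I * σ / 4 + π * I * z)
        + (π * I * σ / 4 + π * I * (z + σ/2 + 1/2 + 1/2)) + (-π * I * (σ + 2 * z))) =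
        Complex.exp (π * I * σ / 4 + π * I * z) *
        Complex.exp (π * I * σ / 4 + π * I * (z + σ/2 + 1/2 + 1/2)) *
        Complex.exp (-π * I * (σ + 2 * z)) := by
      rw [Complex.exp_add, Complex.exp_add]
    rw [e]; ring
  rw [h3]
  have h4 : (π * I * σ / 4 + π * I * z) + (π * I * σ / 4 + π * I * (z + σ/2 + 1/2 + 1/2))
      + (-π * I * (σ + 2 * z)) = π * I := by ring
  rw [h4, Complex.exp_pi_mul_I]; ring

lemma theta4_eq (z σ : ℂ) : theta4 z σ = jacobiTheta₂ (z + 1/2) σ := by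
  rw [theta4, theta3_eq]
-- norm summability of jacobiTheta₂_term
lemma summable_norm_jT {τ : ℂ} (hτ : 0 < τ.im) (z : ℂ) :
    Summable (fun n : ℤ => ‖jacobiTheta₂_term n z τ‖) := by
  apply Summable.of_nonneg_of_le (fun n => norm_nonneg _)
    (fun n => norm_jacobiTheta₂_term_le hτ (le_refl |z.im|) (le_refl τ.im) n)
  simpa using summable_pow_mul_jacobiTheta₂_term_bound |z.im| hτ 0

-- product HasSum
lemma hasSum_jT_mul {τ : ℂ} (hτ : 0 < τ.im) (x y : ℂ) :
    HasSum (fun p : ℤ × ℤ => jacobiTheta₂_term p.1 x τ * jacobiTheta₂_term p.2 y τ)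
      (jacobiTheta₂ x τ * jacobiTheta₂ y τ) := by
  have hs := summable_mul_of_summable_norm (summable_norm_jT hτ x) (summable_norm_jT hτ y)
  have := tsum_mul_tsum_of_summable_norm (summable_norm_jT hτ x) (summable_norm_jT hτ y)
  rw [jacobiTheta₂, jacobiTheta₂, this]
  exact hs.hasSum

def eEven : (ℤ × ℤ) ≃ {p : ℤ × ℤ // Even (p.1 + p.2)} where
  toFun q := ⟨(q.1 + q.2, q.1 - q.2), ⟨q.1, by ring⟩⟩
  invFun p := ((p.1.1 + p.1.2) / 2, (p.1.1 - p.1.2) / 2)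
  left_inv q := by obtain ⟨k, l⟩ := q; simp only [Prod.mk.injEq]; constructor <;> omega
  right_inv p := by
    obtain ⟨⟨m, n⟩, t, ht⟩ := p
    apply Subtype.ext; simp only [Prod.mk.injEq]; simp only at ht
    constructor <;> omega

def eOdd : (ℤ × ℤ) ≃ {p : ℤ × ℤ // ¬ Even (p.1 + p.2)} where
  toFun q := ⟨(q.1 + q.2 + 1, q.1 - q.2), by
    rw [Int.not_even_iff_odd]; exact ⟨q.1, by ring⟩⟩
  invFun p := ((p.1.1 + p.1.2 - 1) / 2, (p.1.1 - p.1.2 - 1) / 2)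
  left_inv q := by obtain ⟨k, l⟩ := q; simp only [Prod.mk.injEq]; constructor <;> omega
  right_inv p := by
    obtain ⟨⟨m, n⟩, hmn⟩ := p
    rw [Int.not_even_iff_odd] at hmn
    obtain ⟨t, ht⟩ := hmn
    simp only [Subtype.mk.injEq, Prod.mk.injEq]
    constructor <;> omega

lemma jT_term_even (σ x y : ℂ) (k l : ℤ) :
    jacobiTheta₂_term (k + l) x σ * jacobiTheta₂_term (k - l) y σ =
    jacobiTheta₂_term k (x + y) (2*σ) * jacobiTheta₂_term l (x - y) (2*σ) := by
  simp only [jacobiTheta₂_term, ← Complex.exp_add]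
  congr 1
  push_cast
  ring

lemma jT_term_odd (σ x y : ℂ) (k l : ℤ) :
    jacobiTheta₂_term (k + l + 1) x σ * jacobiTheta₂_term (k - l) y σ =
    (Complex.exp (π * I * ((k : ℂ) + 1/2)^2 * (2*σ)) *
      Complex.exp (2 * π * I * ((k : ℂ) + 1/2) * ((x + y - 1/2) + 1/2))) *
    (Complex.exp (π * I * ((l : ℂ) + 1/2)^2 * (2*σ)) *
      Complex.exp (2 * π * I * ((l : ℂ) + 1/2) * ((x - y - 1/2) + 1/2))) := by
  simp only [jacobiTheta₂_term, ← Complex.exp_add]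
  congr 1
  push_cast
  ring

set_option maxHeartbeats 1000000 in
lemma prod_split {σ : ℂ} (hσ : 0 < σ.im) (x y : ℂ) :
    jacobiTheta₂ x σ * jacobiTheta₂ y σ =
      jacobiTheta₂ (x + y) (2*σ) * jacobiTheta₂ (x - y) (2*σ)
      + theta1 (x + y - 1/2) (2*σ) * theta1 (x - y - 1/2) (2*σ) := by
  have h2σ : 0 < (2*σ).im := by simp [Complex.mul_im]; linarith
  set F : ℤ × ℤ → ℂ := fun p => jacobiTheta₂_term p.1 x σ * jacobiTheta₂_term p.2 y σ with hF
  have hFsum : HasSum F (jacobiTheta₂ x σ * jacobiTheta₂ y σ) := hasSum_jT_mul hσ x y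
  -- even part
  have hEterm : ∀ q : ℤ × ℤ, F ((eEven q : ℤ × ℤ)) =
      jacobiTheta₂_term q.1 (x + y) (2*σ) * jacobiTheta₂_term q.2 (x - y) (2*σ) := by
    intro q; exact jT_term_even σ x y q.1 q.2
  have hEprod : HasSum (fun q : ℤ × ℤ => F ((eEven q : ℤ × ℤ)))
      (jacobiTheta₂ (x + y) (2*σ) * jacobiTheta₂ (x - y) (2*σ)) := by
    exact (hasSum_jT_mul h2σ (x+y) (x-y)).congr_fun fun q => hEterm q
  have hEsub : HasSum (fun p : {p : ℤ × ℤ // Even (p.1 + p.2)} => F p)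
      (jacobiTheta₂ (x + y) (2*σ) * jacobiTheta₂ (x - y) (2*σ)) := by
    rw [← Equiv.hasSum_iff eEven]
    exact hEprod
  -- odd part
  have hu : HasSum (fun k : ℤ => Complex.exp (π * I * ((k : ℂ) + 1/2)^2 * (2*σ)) *
      Complex.exp (2 * π * I * ((k : ℂ) + 1/2) * ((x + y - 1/2) + 1/2)))
      (-theta1 (x + y - 1/2) (2*σ)) := theta1_hasSum h2σ _
  have hw : HasSum (fun l : ℤ => Complex.exp (π * I * ((l : ℂ) + 1/2)^2 * (2*σ)) *
      Complex.exp (2 * π * I * ((l : ℂ) + 1/2) * ((x - y - 1/2) + 1/2)))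
      (-theta1 (x - y - 1/2) (2*σ)) := theta1_hasSum h2σ _
  have hunorm : Summable (fun k : ℤ => ‖Complex.exp (π * I * ((k : ℂ) + 1/2)^2 * (2*σ)) *
      Complex.exp (2 * π * I * ((k : ℂ) + 1/2) * ((x + y - 1/2) + 1/2))‖) := by
    apply Summable.congr (((summable_norm_jT h2σ ((x+y-1/2) + 1/2 + (2*σ)/2)).mul_left
      ‖Complex.exp (π * I * (2*σ) / 4 + π * I * ((x+y-1/2) + 1/2))‖))
    intro k
    rw [← norm_mul, ← theta1_term_eq]
  have hwnorm : Summable (fun l : ℤ => ‖Complex.exp (π * I * ((l : ℂ) + 1/2)^2 * (2*σ)) *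
      Complex.exp (2 * π * I * ((l : ℂ) + 1/2) * ((x - y - 1/2) + 1/2))‖) := by
    apply Summable.congr (((summable_norm_jT h2σ ((x-y-1/2) + 1/2 + (2*σ)/2)).mul_left
      ‖Complex.exp (π * I * (2*σ) / 4 + π * I * ((x-y-1/2) + 1/2))‖))
    intro k
    rw [← norm_mul, ← theta1_term_eq]
  have hOprod : HasSum (fun q : ℤ × ℤ => F ((eOdd q : ℤ × ℤ)))
      (theta1 (x + y - 1/2) (2*σ) * theta1 (x - y - 1/2) (2*σ)) := by
    have hs := summable_mul_of_summable_norm hunorm hwnorm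
    have ht := tsum_mul_tsum_of_summable_norm hunorm hwnorm
    have h1 : HasSum (fun q : ℤ × ℤ =>
        (Complex.exp (π * I * ((q.1 : ℂ) + 1/2)^2 * (2*σ)) *
          Complex.exp (2 * π * I * ((q.1 : ℂ) + 1/2) * ((x + y - 1/2) + 1/2))) *
        (Complex.exp (π * I * ((q.2 : ℂ) + 1/2)^2 * (2*σ)) *
          Complex.exp (2 * π * I * ((q.2 : ℂ) + 1/2) * ((x - y - 1/2) + 1/2))))
        ((-theta1 (x + y - 1/2) (2*σ)) * (-theta1 (x - y - 1/2) (2*σ))) := by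
      rw [← hu.tsum_eq, ← hw.tsum_eq, ht]
      exact hs.hasSum
    rw [neg_mul_neg] at h1
    exact h1.congr_fun fun q => jT_term_odd σ x y q.1 q.2
  have hOsub : HasSum (fun p : {p : ℤ × ℤ // ¬ Even (p.1 + p.2)} => F p)
      (theta1 (x + y - 1/2) (2*σ) * theta1 (x - y - 1/2) (2*σ)) := by
    rw [← Equiv.hasSum_iff eOdd]
    exact hOprod
  exact hFsum.unique (hEsub.add_compl hOsub)

lemma idA {τ : ℂ} (hτ : 0 < τ.im) (x y : ℂ) :
    theta3 x (τ/2) * theta4 y (τ/2) - theta4 x (τ/2) * theta3 y (τ/2)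
      = -2 * (theta1 (x+y) τ * theta1 (x-y) τ) := by
  have hσ : 0 < (τ/2).im := by
    rw [div_eq_mul_inv, Complex.mul_im]
    norm_num
    linarith
  rw [theta3_eq, theta3_eq, theta4_eq, theta4_eq]
  have h1 := prod_split hσ x (y+1/2)
  have h2 := prod_split hσ (x+1/2) y
  rw [show (2*(τ/2)) = τ from by ring] at h1 h2
  rw [show x+(y+1/2) = x+y+1/2 from by ring, show x-(y+1/2) = x-y-1/2 from by ring,
    show x+y+1/2-1/2 = x+y from by ring, show x-y-1/2-1/2 = x-y-1 from by ring] at h1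
  rw [show x+1/2+y = x+y+1/2 from by ring, show x+1/2-y = x-y+1/2 from by ring,
    show x+y+1/2-1/2 = x+y from by ring, show x-y+1/2-1/2 = x-y from by ring] at h2
  have e2 : jacobiTheta₂ (x-y+1/2) τ = jacobiTheta₂ (x-y-1/2) τ := by
    rw [← jacobiTheta₂_add_left (x-y-1/2) τ]; congr 1; ring
  rw [e2] at h2
  have e3 : theta1 (x-y-1) τ = -theta1 (x-y) τ := by
    have h := theta1_add_one (x-y-1) τ
    rw [show x-y-1+1 = x-y from by ring] at h
    linear_combination h
  rw [h1, h2, e3]; ring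

def dd (a b : ℂ × ℂ) : ℂ := a.1 * b.2 - a.2 * b.1

lemma dd_self (a : ℂ × ℂ) : dd a a = 0 := by simp [dd, mul_comm]

lemma dd_antisymm (a b : ℂ × ℂ) : dd b a = -dd a b := by simp [dd]; ring

lemma plucker (u w vi vj : ℂ × ℂ) :
    dd u w * dd vi vj = dd u vi * dd w vj - dd u vj * dd w vi := by
  simp [dd]; ring

lemma key (v : ℕ → ℂ × ℂ) (W : Multiset (ℂ × ℂ)) : ∀ (s : Finset ℕ),
    s.card = Multiset.card W + 2 →
    (∀ l ∈ s, ∀ m ∈ s, l ≠ m → dd (v l) (v m) ≠ 0) →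
    ∑ l ∈ s, (W.map (fun w => dd (v l) w)).prod / ∏ m ∈ s.erase l, dd (v l) (v m) = 0 := by
  induction W using Multiset.induction with
  | empty =>
    intro s hcard hnv
    obtain ⟨a, b, hab, rfl⟩ := Finset.card_eq_two.mp (by simpa using hcard)
    rw [Finset.sum_pair hab]
    have h1 : ({a, b} : Finset ℕ).erase a = {b} := by
      ext x; simp [Finset.mem_erase]; intro h; omega
    have h2 : ({a, b} : Finset ℕ).erase b = {a} := by
      ext x; simp [Finset.mem_erase]; constructor
      · rintro ⟨h1, h2 | h2⟩ <;> omega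
      · intro h; omega
    rw [h1, h2]
    simp only [Multiset.map_zero, Multiset.prod_zero, Finset.prod_singleton]
    rw [dd_antisymm (v a) (v b), div_neg]
    ring
  | cons w W' ih =>
    intro s hcard hnv
    have hs2 : 1 < s.card := by simp at hcard; omega
    obtain ⟨i, hi, j, hj, hij⟩ := Finset.one_lt_card.mp hs2
    have hDij : dd (v i) (v j) ≠ 0 := hnv i hi j hj hij
    -- auxiliary vanishing sums
    have aux : ∀ p ∈ s, ∑ l ∈ s,
        dd (v l) (v p) * (W'.map (fun w => dd (v l) w)).prod /
          ∏ m ∈ s.erase l, dd (v l) (v m) = 0 := by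
      intro p hp
      rw [← Finset.sum_erase_add s _ hp, dd_self, zero_mul, zero_div, add_zero]
      have hterm : ∀ l ∈ s.erase p,
          dd (v l) (v p) * (W'.map (fun w => dd (v l) w)).prod /
            ∏ m ∈ s.erase l, dd (v l) (v m)
          = (W'.map (fun w => dd (v l) w)).prod /
            ∏ m ∈ (s.erase p).erase l, dd (v l) (v m) := by
        intro l hl
        have hlp : l ≠ p := (Finset.mem_erase.mp hl).1
        have hls : l ∈ s := (Finset.mem_erase.mp hl).2
        have hpe : p ∈ s.erase l := Finset.mem_erase.mpr ⟨fun h => hlp h.symm, hp⟩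
        rw [← Finset.mul_prod_erase (s.erase l) _ hpe, Finset.erase_right_comm,
          mul_div_mul_left _ _ (hnv l hls p hp hlp)]
      rw [Finset.sum_congr rfl hterm]
      refine ih (s.erase p) ?_ ?_
      · rw [Finset.card_erase_of_mem hp]; simp at hcard ⊢; omega
      · intro l hl m hm hlm
        exact hnv l (Finset.mem_of_mem_erase hl) m (Finset.mem_of_mem_erase hm) hlm
    -- expand dd (v l) w
    have hexp : ∀ l, dd (v l) w =
        (dd w (v j) / dd (v i) (v j)) * dd (v l) (v i) +
        (-dd w (v i) / dd (v i) (v j)) * dd (v l) (v j) := by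
      intro l
      field_simp
      linear_combination plucker (v l) w (v i) (v j)
    have hsplit : ∀ l, ((w ::ₘ W').map (fun w' => dd (v l) w')).prod /
          ∏ m ∈ s.erase l, dd (v l) (v m)
        = (dd w (v j) / dd (v i) (v j)) *
            (dd (v l) (v i) * (W'.map (fun w' => dd (v l) w')).prod /
              ∏ m ∈ s.erase l, dd (v l) (v m)) +
          (-dd w (v i) / dd (v i) (v j)) *
            (dd (v l) (v j) * (W'.map (fun w' => dd (v l) w')).prod /
              ∏ m ∈ s.erase l, dd (v l) (v m)) := by
      intro l
      rw [Multiset.map_cons, Multiset.prod_cons, hexp l]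
      ring
    rw [Finset.sum_congr rfl (fun l _ => hsplit l), Finset.sum_add_distrib,
      ← Finset.mul_sum, ← Finset.mul_sum, aux i hi, aux j hj, mul_zero, mul_zero, add_zero]

lemma prod_erase_split (n l : ℕ) (hl : l ≤ n) (f : ℕ → ℂ) :
    ∏ m ∈ (Finset.range (n+1)).erase l, f m =
      (∏ m ∈ Finset.range l, f m) * ∏ m ∈ Finset.range (n-l), f (l+1+m) := by
  have hset : (Finset.range (n+1)).erase l =
      Finset.range l ∪ Finset.Ico (l+1) (n+1) := by
    ext x
    simp only [Finset.mem_erase, Finset.mem_range, Finset.mem_union, Finset.mem_Ico]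
    omega
  have hdisj : Disjoint (Finset.range l) (Finset.Ico (l+1) (n+1)) := by
    rw [Finset.disjoint_left]
    intro x hx hx'
    simp only [Finset.mem_range] at hx
    simp only [Finset.mem_Ico] at hx'
    omega
  rw [hset, Finset.prod_union hdisj, Finset.prod_Ico_eq_prod_range,
    show n+1-(l+1) = n-l from by omega]

lemma erase_prod_theta (τ η : ℂ) (n l : ℕ) (hl : l ≤ n) :
    ∏ m ∈ (Finset.range (n+1)).erase l, theta1 (2*η*((m:ℂ) - (l:ℂ))) τ =
      (-1:ℂ)^l * (∏ k ∈ Finset.range l, theta1 (2*η*((k:ℂ)+1)) τ) *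
        ∏ k ∈ Finset.range (n-l), theta1 (2*η*((k:ℂ)+1)) τ := by
  rw [prod_erase_split n l hl]
  have h2 : ∏ m ∈ Finset.range (n-l), theta1 (2*η*(((l+1+m : ℕ):ℂ) - (l:ℂ))) τ =
      ∏ k ∈ Finset.range (n-l), theta1 (2*η*((k:ℂ)+1)) τ := by
    refine Finset.prod_congr rfl fun m _ => ?_
    congr 1
    push_cast
    ring
  rw [h2]
  have h1 : ∏ m ∈ Finset.range l, theta1 (2*η*((m:ℂ) - (l:ℂ))) τ =
      (-1:ℂ)^l * ∏ k ∈ Finset.range l, theta1 (2*η*((k:ℂ)+1)) τ := by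
    rw [← Finset.prod_range_reflect (fun m => theta1 (2*η*((m:ℂ) - (l:ℂ))) τ) l]
    have hterm : ∀ m ∈ Finset.range l,
        theta1 (2*η*(((l-1-m : ℕ):ℂ) - (l:ℂ))) τ = -1 * theta1 (2*η*((m:ℂ)+1)) τ := by
      intro m hm
      simp only [Finset.mem_range] at hm
      have hcast : ((l-1-m : ℕ):ℂ) = (l:ℂ) - 1 - (m:ℂ) := by
        have h' : l - 1 - m = l - (1+m) := by omega
        rw [h', Nat.cast_sub (by omega : 1 + m ≤ l)]
        push_cast
        ring
      rw [hcast, show 2*η*(((l:ℂ) - 1 - (m:ℂ)) - (l:ℂ)) = -(2*η*((m:ℂ)+1)) from by ring,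
        theta1_neg]
      ring
    rw [Finset.prod_congr rfl hterm, Finset.prod_mul_distrib, Finset.prod_const,
      Finset.card_range]
  rw [h1]

lemma den_reflect (τ η z : ℂ) (n l : ℕ) :
    ∏ k ∈ Finset.range (n+1), theta1 (2*z - 2*η*((l:ℂ) - (k:ℂ))) τ =
      ∏ m ∈ Finset.range (n+1),
        theta1 ((z + ((n:ℂ)-2*(l:ℂ))*η) + (z + ((n:ℂ)-2*(m:ℂ))*η)) τ := by
  rw [← Finset.prod_range_reflect
    (fun m => theta1 ((z + ((n:ℂ)-2*(l:ℂ))*η) + (z + ((n:ℂ)-2*(m:ℂ))*η)) τ) (n+1)]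
  refine Finset.prod_congr rfl fun k hk => ?_
  simp only [Finset.mem_range] at hk
  congr 1
  have hc : ((n+1-1-k : ℕ):ℂ) = (n:ℂ) - (k:ℂ) := by
    have h' : n+1-1-k = n-k := by omega
    rw [h', Nat.cast_sub (by omega : k ≤ n)]
  rw [hc]
  ring

def Xp (z η : ℂ) (n : ℕ) (l : ℕ) : ℂ := z + ((n:ℂ) - 2*(l:ℂ))*η

/-- zero modes of the intertwiner on the lattice g = nη. -/
theorem zero_modes_n_eta (τ η : ℂ) (hτ : 0 < τ.im) (hη : 0 < η.im)
    (n : ℕ) (hn : 1 ≤ n) (j : ℕ) (hj : j ≤ n-1)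
    (z : ℂ) (hz : ∀ r : ℤ, |r| ≤ (n:ℤ) → theta1 (2*z + 2*η*(r:ℂ)) τ ≠ 0) :
    ∑ l ∈ Finset.range (n+1), (-1:ℂ)^l * alphaC τ η n l z *
      theta3 (z + ((n:ℂ)-2*l)*η) (τ/2)^j *
      theta4 (z + ((n:ℂ)-2*l)*η) (τ/2)^(n-1-j) = 0 := by
  by_cases hPn : (∏ k ∈ Finset.range n, theta1 (2*η*((k:ℂ)+1)) τ) = 0
  · refine Finset.sum_eq_zero fun l hl => ?_
    simp [alphaC, ebinom, hPn]
  · -- generic case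
    have hP : ∀ k ∈ Finset.range n, theta1 (2*η*((k:ℂ)+1)) τ ≠ 0 :=
      Finset.prod_ne_zero_iff.mp hPn
    set V : ℕ → ℂ × ℂ :=
      fun l => (theta3 (Xp z η n l) (τ/2), theta4 (Xp z η n l) (τ/2)) with hV
    set W : Multiset (ℂ × ℂ) :=
      Multiset.replicate j ((0:ℂ),(1:ℂ)) + Multiset.replicate (n-1-j) ((-1:ℂ),(0:ℂ)) with hW
    have hplus : ∀ l m : ℕ, l ≤ n → m ≤ n → theta1 (Xp z η n l + Xp z η n m) τ ≠ 0 := by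
      intro l m hln hmn
      have h := hz ((n:ℤ) - l - m) (by rw [abs_le]; constructor <;> omega)
      have harg : Xp z η n l + Xp z η n m = 2*z + 2*η*((((n:ℤ) - l - m : ℤ)):ℂ) := by
        simp only [Xp]
        push_cast
        ring
      rw [harg]
      exact h
    have hminus : ∀ l m : ℕ, l ≤ n → m ≤ n → l ≠ m →
        theta1 (Xp z η n l - Xp z η n m) τ ≠ 0 := by
      intro l m hln hmn hlm
      rcases lt_or_gt_of_ne hlm with h | h
      · have harg : Xp z η n l - Xp z η n m = 2*η*(((m-l-1:ℕ):ℂ)+1) := by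
          simp only [Xp]
          rw [Nat.cast_sub (by omega : 1 ≤ m - l), Nat.cast_sub (by omega : l ≤ m)]
          push_cast
          ring
        rw [harg]
        exact hP (m-l-1) (Finset.mem_range.mpr (by omega))
      · have harg : Xp z η n l - Xp z η n m = -(2*η*(((l-m-1:ℕ):ℂ)+1)) := by
          simp only [Xp]
          rw [Nat.cast_sub (by omega : 1 ≤ l - m), Nat.cast_sub (by omega : m ≤ l)]
          push_cast
          ring
        rw [harg, theta1_neg]
        exact neg_ne_zero.mpr (hP (l-m-1) (Finset.mem_range.mpr (by omega)))
    have hdd : ∀ l m : ℕ, dd (V l) (V m) =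
        -2*(theta1 (Xp z η n l + Xp z η n m) τ * theta1 (Xp z η n l - Xp z η n m) τ) := by
      intro l m
      simp only [dd, hV]
      exact idA hτ (Xp z η n l) (Xp z η n m)
    have hnv : ∀ l ∈ Finset.range (n+1), ∀ m ∈ Finset.range (n+1), l ≠ m →
        dd (V l) (V m) ≠ 0 := by
      intro l hl m hm hlm
      rw [hdd l m]
      simp only [Finset.mem_range] at hl hm
      exact mul_ne_zero (by norm_num)
        (mul_ne_zero (hplus l m (by omega) (by omega)) (hminus l m (by omega) (by omega) hlm))
    have hcard : (Finset.range (n+1)).card = Multiset.card W + 2 := by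
      simp only [hW, Finset.card_range, Multiset.card_add, Multiset.card_replicate]
      omega
    have hkey := key V W (Finset.range (n+1)) hcard hnv
    have hWprod : ∀ l : ℕ, (W.map (fun w => dd (V l) w)).prod =
        theta3 (Xp z η n l) (τ/2)^j * theta4 (Xp z η n l) (τ/2)^(n-1-j) := by
      intro l
      simp only [hW, Multiset.map_add, Multiset.map_replicate, Multiset.prod_add,
        Multiset.prod_replicate]
      congr 1
      · congr 1
        simp [dd, hV]
      · congr 1
        simp [dd, hV]
    have hterm : ∀ l ∈ Finset.range (n+1),
        (-1:ℂ)^l * alphaC τ η n l z * theta3 (Xp z η n l) (τ/2)^j *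
          theta4 (Xp z η n l) (τ/2)^(n-1-j)
        = ((cA τ η)^n * (∏ k ∈ Finset.range n, theta1 (2*η*((k:ℂ)+1)) τ) * (-2)^n) *
          ((W.map (fun w => dd (V l) w)).prod /
            ∏ m ∈ (Finset.range (n+1)).erase l, dd (V l) (V m)) := by
      intro l hl
      rw [Finset.mem_range] at hl
      have hln : l ≤ n := by omega
      have hfull : ∏ k ∈ Finset.range (n+1), theta1 (2*z - 2*η*((l:ℂ) - (k:ℂ))) τ
          = theta1 (Xp z η n l + Xp z η n l) τ *
            ∏ m ∈ (Finset.range (n+1)).erase l, theta1 (Xp z η n l + Xp z η n m) τ := by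
        rw [den_reflect τ η z n l]
        exact (Finset.mul_prod_erase _ (fun m => theta1 (Xp z η n l + Xp z η n m) τ)
          (Finset.mem_range.mpr hl)).symm
      have hE : ∏ m ∈ (Finset.range (n+1)).erase l, theta1 (Xp z η n l - Xp z η n m) τ
          = (-1:ℂ)^l * (∏ k ∈ Finset.range l, theta1 (2*η*((k:ℂ)+1)) τ) *
            (∏ k ∈ Finset.range (n-l), theta1 (2*η*((k:ℂ)+1)) τ) := by
        rw [← erase_prod_theta τ η n l hln]
        refine Finset.prod_congr rfl fun m hm => ?_
        congr 1
        simp only [Xp]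
        ring
      have hddprod : ∏ m ∈ (Finset.range (n+1)).erase l, dd (V l) (V m)
          = (-2:ℂ)^n *
            ((∏ m ∈ (Finset.range (n+1)).erase l, theta1 (Xp z η n l + Xp z η n m) τ) *
             ∏ m ∈ (Finset.range (n+1)).erase l, theta1 (Xp z η n l - Xp z η n m) τ) := by
        rw [Finset.prod_congr rfl (fun m (_ : m ∈ (Finset.range (n+1)).erase l) => hdd l m),
          Finset.prod_mul_distrib, Finset.prod_const, Finset.prod_mul_distrib,
          Finset.card_erase_of_mem (Finset.mem_range.mpr hl), Finset.card_range,
          Nat.add_sub_cancel]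
      have hA : theta1 (Xp z η n l + Xp z η n l) τ ≠ 0 := hplus l l hln hln
      have hDp : (∏ m ∈ (Finset.range (n+1)).erase l, theta1 (Xp z η n l + Xp z η n m) τ) ≠ 0 :=
        Finset.prod_ne_zero_iff.mpr fun m hm => hplus l m hln
          (by have := Finset.mem_range.mp (Finset.mem_of_mem_erase hm); omega)
      have hEne : (∏ m ∈ (Finset.range (n+1)).erase l, theta1 (Xp z η n l - Xp z η n m) τ) ≠ 0 :=
        Finset.prod_ne_zero_iff.mpr fun m hm => hminus l m hln
          (by have := Finset.mem_range.mp (Finset.mem_of_mem_erase hm); omega)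
          (Ne.symm (Finset.mem_erase.mp hm).1)
      have hPl : (∏ k ∈ Finset.range l, theta1 (2*η*((k:ℂ)+1)) τ) ≠ 0 :=
        Finset.prod_ne_zero_iff.mpr fun k hk => hP k
          (Finset.mem_range.mpr (by have := Finset.mem_range.mp hk; omega))
      have hPnl : (∏ k ∈ Finset.range (n-l), theta1 (2*η*((k:ℂ)+1)) τ) ≠ 0 :=
        Finset.prod_ne_zero_iff.mpr fun k hk => hP k
          (Finset.mem_range.mpr (by have := Finset.mem_range.mp hk; omega))
      have hnum : theta1 (2*z + 2*η*((n:ℂ) - 2*(l:ℂ))) τ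
          = theta1 (Xp z η n l + Xp z η n l) τ := by
        congr 1
        simp only [Xp]
        ring
      have hm1 : ((-1:ℂ)^l) * ((-1:ℂ)^l) = 1 := by
        rw [← pow_add, ← two_mul, pow_mul]
        norm_num
      have hPP : (∏ k ∈ Finset.range l, theta1 (2*η*((k:ℂ)+1)) τ) *
          (∏ k ∈ Finset.range (n-l), theta1 (2*η*((k:ℂ)+1)) τ)
          = (-1:ℂ)^l *
            ∏ m ∈ (Finset.range (n+1)).erase l, theta1 (Xp z η n l - Xp z η n m) τ := by
        rw [hE]
        linear_combination (-((∏ k ∈ Finset.range l, theta1 (2*η*((k:ℂ)+1)) τ) *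
          (∏ k ∈ Finset.range (n-l), theta1 (2*η*((k:ℂ)+1)) τ))) * hm1
      have h1ne : ((-1:ℂ)^l) ≠ 0 := pow_ne_zero _ (by norm_num)
      have h2ne : ((-2:ℂ)^n) ≠ 0 := pow_ne_zero _ (by norm_num)
      rw [alphaC, ebinom, hnum, hfull, hPP, hWprod l, hddprod]
      field_simp
      have hA' : theta1 (Xp z η n l * (1 + 1)) τ ≠ 0 := by rw [mul_add_one, mul_one]; exact hA
      rw [div_eq_iff hA']
      ring
    have hsum : ∑ l ∈ Finset.range (n+1), (-1:ℂ)^l * alphaC τ η n l z *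
        theta3 (Xp z η n l) (τ/2)^j * theta4 (Xp z η n l) (τ/2)^(n-1-j) = 0 := by
      rw [Finset.sum_congr rfl hterm, ← Finset.mul_sum, hkey, mul_zero]
    exact hsum
end
end

section
/- Quasiperiodicity of the β-coefficients: for all integers m ≥ 0, 0 ≤ ℓ ≤ m, n, k, and every z ∈ ℂ at which all θ₁-factors in the denominators of β_ℓ^{(m)} at z and at z+η(n−2k) are nonzero, one has β_ℓ^{(m)}(z+η(n−2k)) = (−1)^{nm} · e^{4πiz·m(n−2k)} · e^{2πiη·m(n−2k)²} · e^{πiτ(m−1)(m−2ℓ)(n−2k)} · β_ℓ^{(m)}(z). -/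
noncomputable section

open Complex BigOperators Finset

local notation "π" => (Real.pi : ℂ)

/-- Coefficient β_s^{(m)}(z). -/
def betaC (τ η : ℂ) (m s : ℕ) (z : ℂ) : ℂ :=
  (cB τ η)^m *
  ((∏ j ∈ Finset.range m, theta1 (τ*((j:ℂ)+1)) (2*η)) /
   ((∏ j ∈ Finset.range s, theta1 (τ*((j:ℂ)+1)) (2*η)) *
    (∏ j ∈ Finset.range (m-s), theta1 (τ*((j:ℂ)+1)) (2*η)))) *
    theta1 (2*z + τ*((m:ℂ) - 2*s)) (2*η) /
    ∏ j ∈ Finset.range (m+1), theta1 (2*z - τ*((s:ℂ) - (j:ℂ))) (2*η)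

lemma exp_pi_I_int (M : ℤ) : Complex.exp (π*I*(M:ℂ)) = (-1:ℂ)^M := by
  rw [show π*I*(M:ℂ) = (M:ℂ)*(π*I) by ring, Complex.exp_int_mul, Complex.exp_pi_mul_I]

lemma neg_one_zpow_eq_exp (M : ℤ) : (-1:ℂ)^M = Complex.exp (-(π*I*(M:ℂ))) := by
  rw [show -(π*I*(M:ℂ)) = ((-M:ℤ):ℂ)*(π*I) by push_cast; ring, Complex.exp_int_mul,
    Complex.exp_pi_mul_I, zpow_neg, ← inv_zpow, inv_neg_one]

lemma exp_eq_of_sub (a b : ℂ) (t : ℤ) (h : a = b + (t:ℂ)*(2*π*I)) :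
    Complex.exp a = Complex.exp b := by
  rw [h, Complex.exp_add, Complex.exp_int_mul_two_pi_mul_I, mul_one]

lemma assemble (A θ D K C : ℂ) (hC : C ≠ 0) (hD : D ≠ 0) :
    A * (K * C * θ) / (C * D) = K * (A * θ / D) := by
  field_simp

lemma theta1_shift (z σ : ℂ) (N : ℤ) :
    theta1 (z + (N:ℂ)*σ) σ =
      (-1:ℂ)^N * Complex.exp (-(π*I*(N:ℂ)^2*σ) - 2*π*I*(N:ℂ)*z) * theta1 z σ := by
  unfold theta1
  have h1 : ∀ n : ℤ,
      Complex.exp (π * I * ((n : ℂ) + 1/2)^2 * σ) *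
        Complex.exp (2 * π * I * ((n : ℂ) + 1/2) * ((z + (N:ℂ)*σ) + 1/2))
      = ((-1:ℂ)^N * Complex.exp (-(π*I*(N:ℂ)^2*σ) - 2*π*I*(N:ℂ)*z)) *
        (Complex.exp (π * I * (((n + N : ℤ) : ℂ) + 1/2)^2 * σ) *
         Complex.exp (2 * π * I * (((n + N : ℤ) : ℂ) + 1/2) * (z + 1/2))) := by
    intro nn
    rw [neg_one_zpow_eq_exp N, ← Complex.exp_add, ← Complex.exp_add, ← Complex.exp_add,
        ← Complex.exp_add]
    congr 1
    push_cast
    ring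
  have h2 := (Equiv.addRight N).tsum_eq (fun j : ℤ =>
    Complex.exp (π * I * ((j:ℂ) + 1/2)^2 * σ) *
      Complex.exp (2 * π * I * ((j:ℂ) + 1/2) * (z + 1/2)))
  simp only [Equiv.coe_addRight] at h2
  rw [tsum_congr h1, tsum_mul_left, h2]
  ring

/-- quasiperiodicity of the coefficients β_l^{(m)}. -/
theorem beta_quasiperiodicity (τ η : ℂ) (hτ : 0 < τ.im) (hη : 0 < η.im)
    (m l : ℕ) (hl : l ≤ m) (n k : ℤ) (z : ℂ)
    (hden : ∀ j : ℕ, j ≤ m →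
        theta1 (2*z - τ*((l:ℂ)-(j:ℂ))) (2*η) ≠ 0 ∧
        theta1 (2*(z + η*((n:ℂ)-2*(k:ℂ))) - τ*((l:ℂ)-(j:ℂ))) (2*η) ≠ 0)
    (hbin : ∀ i : ℕ, 1 ≤ i → i ≤ m → theta1 (τ*(i:ℂ)) (2*η) ≠ 0) :
    betaC τ η m l (z + η*((n:ℂ)-2*(k:ℂ))) =
      (-1:ℂ)^(n*(m:ℤ)) * Complex.exp (4*π*I*z*(m:ℂ)*((n:ℂ)-2*(k:ℂ))) *
      Complex.exp (2*π*I*η*(m:ℂ)*((n:ℂ)-2*(k:ℂ))^2) *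
      Complex.exp (π*I*τ*((m:ℂ)-1)*((m:ℂ)-2*(l:ℂ))*((n:ℂ)-2*(k:ℂ))) *
      betaC τ η m l z := by
  set N : ℤ := n - 2*k with hNdef
  have hNc : (n:ℂ) - 2*(k:ℂ) = (N:ℂ) := by push_cast [hNdef]; ring
  rw [hNc]
  -- numerator shift
  have hnum : theta1 (2*(z + η*(N:ℂ)) + τ*((m:ℂ) - 2*(l:ℂ))) (2*η)
      = (-1:ℂ)^N *
        Complex.exp (-(π*I*(N:ℂ)^2*(2*η)) - 2*π*I*(N:ℂ)*(2*z + τ*((m:ℂ)-2*(l:ℂ)))) *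
        theta1 (2*z + τ*((m:ℂ)-2*(l:ℂ))) (2*η) := by
    rw [show 2*(z + η*(N:ℂ)) + τ*((m:ℂ) - 2*(l:ℂ))
        = (2*z + τ*((m:ℂ)-2*(l:ℂ))) + (N:ℂ)*(2*η) by ring]
    exact theta1_shift _ _ N
  -- denominator shift
  have hterm : ∀ j ∈ Finset.range (m+1),
      theta1 (2*(z + η*(N:ℂ)) - τ*((l:ℂ) - (j:ℂ))) (2*η)
      = ((-1:ℂ)^N *
          Complex.exp (-(π*I*(N:ℂ)^2*(2*η)) - 2*π*I*(N:ℂ)*(2*z - τ*((l:ℂ)-(j:ℂ))))) *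
        theta1 (2*z - τ*((l:ℂ)-(j:ℂ))) (2*η) := by
    intro j _
    rw [show 2*(z + η*(N:ℂ)) - τ*((l:ℂ) - (j:ℂ))
        = (2*z - τ*((l:ℂ)-(j:ℂ))) + (N:ℂ)*(2*η) by ring]
    rw [theta1_shift]
  have hprod : ∏ j ∈ Finset.range (m+1),
        theta1 (2*(z + η*(N:ℂ)) - τ*((l:ℂ) - (j:ℂ))) (2*η)
      = (((-1:ℂ)^N)^(m+1) *
          Complex.exp (∑ j ∈ Finset.range (m+1),
            (-(π*I*(N:ℂ)^2*(2*η)) - 2*π*I*(N:ℂ)*(2*z - τ*((l:ℂ)-(j:ℂ)))))) *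
        ∏ j ∈ Finset.range (m+1), theta1 (2*z - τ*((l:ℂ)-(j:ℂ))) (2*η) := by
    rw [Finset.prod_congr rfl hterm, Finset.prod_mul_distrib, Finset.prod_mul_distrib,
      Finset.prod_const, Finset.card_range, Complex.exp_sum]
  -- Gauss sum
  have hj2 : (∑ j ∈ Finset.range (m+1), (j:ℂ)) * 2 = ((m:ℂ)+1)*(m:ℂ) := by
    have h := Finset.sum_range_id_mul_two (m+1)
    have h2 : (((∑ i ∈ Finset.range (m+1), i) * 2 : ℕ) : ℂ) = (((m+1) * (m+1-1) : ℕ) : ℂ) := by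
      rw [h]
    rw [Nat.add_sub_cancel] at h2
    push_cast at h2
    exact h2
  have hS : (∑ j ∈ Finset.range (m+1),
        (-(π*I*(N:ℂ)^2*(2*η)) - 2*π*I*(N:ℂ)*(2*z - τ*((l:ℂ)-(j:ℂ)))))
      = ((m:ℂ)+1) * (-(π*I*(N:ℂ)^2*(2*η)) - 2*π*I*(N:ℂ)*(2*z - τ*(l:ℂ)))
        - (2*π*I*(N:ℂ)*τ) * (∑ j ∈ Finset.range (m+1), (j:ℂ)) := by
    have e : ∀ j ∈ Finset.range (m+1),
        (-(π*I*(N:ℂ)^2*(2*η)) - 2*π*I*(N:ℂ)*(2*z - τ*((l:ℂ)-(j:ℂ))))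
        = (-(π*I*(N:ℂ)^2*(2*η)) - 2*π*I*(N:ℂ)*(2*z - τ*(l:ℂ))) - (2*π*I*(N:ℂ)*τ) * (j:ℂ) :=
      fun j _ => by ring
    rw [Finset.sum_congr rfl e, Finset.sum_sub_distrib, Finset.sum_const, Finset.card_range,
      ← Finset.mul_sum, nsmul_eq_mul]
    push_cast
    ring
  -- key scalar identity
  have key : (-1:ℂ)^(n*(m:ℤ)) * Complex.exp (4*π*I*z*(m:ℂ)*(N:ℂ)) *
      Complex.exp (2*π*I*η*(m:ℂ)*(N:ℂ)^2) *
      Complex.exp (π*I*τ*((m:ℂ)-1)*((m:ℂ)-2*(l:ℂ))*(N:ℂ)) *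
      (((-1:ℂ)^N)^(m+1) *
        Complex.exp (∑ j ∈ Finset.range (m+1),
          (-(π*I*(N:ℂ)^2*(2*η)) - 2*π*I*(N:ℂ)*(2*z - τ*((l:ℂ)-(j:ℂ))))))
      = (-1:ℂ)^N *
        Complex.exp (-(π*I*(N:ℂ)^2*(2*η)) - 2*π*I*(N:ℂ)*(2*z + τ*((m:ℂ)-2*(l:ℂ)))) := by
    rw [hS]
    have hjc : (∑ j ∈ Finset.range (m+1), (j:ℂ)) = ((m:ℂ)+1)*(m:ℂ)/2 := by
      field_simp [hj2]
      linear_combination hj2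
    rw [hjc]
    rw [neg_one_zpow_eq_exp (n*(m:ℤ)), neg_one_zpow_eq_exp N, ← Complex.exp_nat_mul]
    simp only [← Complex.exp_add]
    refine exp_eq_of_sub _ _ (-((n-k)*(m:ℤ))) ?_
    push_cast [hNdef]
    ring
  -- assemble
  have hD : (∏ j ∈ Finset.range (m+1), theta1 (2*z - τ*((l:ℂ)-(j:ℂ))) (2*η)) ≠ 0 :=
    Finset.prod_ne_zero_iff.mpr fun j hj =>
      (hden j (Nat.lt_succ_iff.mp (Finset.mem_range.mp hj))).1
  have hu : ((-1:ℂ)^N) ≠ 0 := zpow_ne_zero N (by norm_num)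
  have hC : ((-1:ℂ)^N)^(m+1) *
      Complex.exp (∑ j ∈ Finset.range (m+1),
        (-(π*I*(N:ℂ)^2*(2*η)) - 2*π*I*(N:ℂ)*(2*z - τ*((l:ℂ)-(j:ℂ))))) ≠ 0 :=
    mul_ne_zero (pow_ne_zero _ hu) (Complex.exp_ne_zero _)
  unfold betaC
  rw [hnum, hprod, ← key]
  exact assemble _ _ _ _ _ hC hD
end
end

section
/- Conjugation of the discrete operator M(mτ/2) by theta-function powers: for k ∈ {3,4}, all integers n ≥ 0 and m ≥ 0, every function f : ℂ → ℂ, and every z ∈ ℂ such that θ_k(z+(m−2s)τ/2|τ/2) ≠ 0 for all 0 ≤ s ≤ m and all θ₁-factors in the denominators of β_s^{(m)}(z) are nonzero, one has θ_k(z|τ/2)^n · [M(mτ/2)(w ↦ θ_k(w|τ/2)^{−n} f(w))](z) = (−1)^{mn·δ_{k,4}} · e^{−2πinz²/τ} · [M(mτ/2)(w ↦ e^{2πinw²/τ} f(w))](z). -/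
noncomputable section

open Complex BigOperators Finset

local notation "π" => (Real.pi : ℂ)

/-- The finite-difference operator M(mτ/2). -/
def MtauOp (τ η : ℂ) (m : ℕ) (h : ℂ → ℂ) (z : ℂ) : ℂ :=
  Complex.exp (2*π*I*z^2/τ) * ∑ s ∈ Finset.range (m+1), (-1:ℂ)^s * betaC τ η m s z *
    Complex.exp (-2*π*I*(z + ((m:ℂ)-2*s)*τ/2)^2/τ) * h (z + ((m:ℂ)-2*s)*τ/2)

lemma exp_neg_pi_I : Complex.exp (-(π*I)) = -1 := by
  rw [Complex.exp_neg, Complex.exp_pi_mul_I]; norm_num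

lemma theta1_add_period (z σ : ℂ) :
    theta1 (z + σ) σ = -Complex.exp (-π*I*σ - 2*π*I*z) * theta1 z σ := by
  unfold theta1
  have key : ∀ n : ℤ,
      Complex.exp (π * I * ((n:ℂ) + 1/2)^2 * σ) *
        Complex.exp (2 * π * I * ((n:ℂ) + 1/2) * (z + σ + 1/2))
      = -Complex.exp (-π*I*σ - 2*π*I*z) *
        (Complex.exp (π * I * (((n + 1 : ℤ):ℂ) + 1/2)^2 * σ) *
         Complex.exp (2 * π * I * (((n + 1 : ℤ):ℂ) + 1/2) * (z + 1/2))) := by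
    intro n
    have h1 : Complex.exp (π * I * ((n:ℂ) + 1/2)^2 * σ) *
        Complex.exp (2 * π * I * ((n:ℂ) + 1/2) * (z + σ + 1/2))
        = Complex.exp (((-π*I*σ - 2*π*I*z) +
            (π * I * (((n:ℂ)+1) + 1/2)^2 * σ +
             2 * π * I * (((n:ℂ)+1) + 1/2) * (z + 1/2))) + (-(π*I))) := by
      rw [← Complex.exp_add]; congr 1; ring
    rw [h1, Complex.exp_add, Complex.exp_add, Complex.exp_add, exp_neg_pi_I]
    push_cast
    ring
  have hshift : (∑' n : ℤ, Complex.exp (π * I * (((n + 1 : ℤ):ℂ) + 1/2)^2 * σ) *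
      Complex.exp (2 * π * I * (((n + 1 : ℤ):ℂ) + 1/2) * (z + 1/2)))
      = ∑' n : ℤ, Complex.exp (π * I * ((n:ℂ) + 1/2)^2 * σ) *
        Complex.exp (2 * π * I * ((n:ℂ) + 1/2) * (z + 1/2)) := by
    simpa using (Equiv.addRight (1:ℤ)).tsum_eq (fun n : ℤ =>
      Complex.exp (π * I * ((n:ℂ) + 1/2)^2 * σ) *
        Complex.exp (2 * π * I * ((n:ℂ) + 1/2) * (z + 1/2)))
  rw [tsum_congr key, tsum_mul_left, hshift]
  ring

lemma theta2_add_period (z σ : ℂ) :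
    theta2 (z + σ) σ = Complex.exp (-π*I*σ - 2*π*I*z) * theta2 z σ := by
  unfold theta2
  rw [show z + σ + 1/2 = (z + 1/2) + σ by ring, theta1_add_period]
  rw [show -π*I*σ - 2*π*I*(z + 1/2) = (-π*I*σ - 2*π*I*z) + (-(π*I)) by ring,
    Complex.exp_add, exp_neg_pi_I]
  ring

lemma theta3_add_period (z σ : ℂ) :
    theta3 (z + σ) σ = Complex.exp (-π*I*σ - 2*π*I*z) * theta3 z σ := by
  unfold theta3
  rw [show z + σ + σ/2 = (z + σ/2) + σ by ring, theta2_add_period]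
  have hc : ∀ A B : ℂ, Complex.exp A * (Complex.exp B * theta2 (z + σ/2) σ)
      = Complex.exp (A + B) * theta2 (z + σ/2) σ := by
    intro A B; rw [Complex.exp_add]; ring
  rw [hc, hc]
  congr 2
  ring

lemma theta4_add_period (z σ : ℂ) :
    theta4 (z + σ) σ = -Complex.exp (-π*I*σ - 2*π*I*z) * theta4 z σ := by
  unfold theta4
  rw [show z + σ + 1/2 = (z + 1/2) + σ by ring, theta3_add_period]
  rw [show -π*I*σ - 2*π*I*(z + 1/2) = (-π*I*σ - 2*π*I*z) + (-(π*I)) by ring,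
    Complex.exp_add, exp_neg_pi_I]
  ring

lemma th_shift (th : ℂ → ℂ → ℂ) (ε : ℂ) (hε0 : ε ≠ 0)
    (H : ∀ w σ, th (w + σ) σ = ε * Complex.exp (-π*I*σ - 2*π*I*w) * th w σ)
    (σ z : ℂ) : ∀ a : ℤ,
    th (z + (a:ℂ)*σ) σ = ε^a * Complex.exp (-π*I*((a:ℂ)^2*σ + 2*(a:ℂ)*z)) * th z σ := by
  intro a
  induction a using Int.induction_on with
  | zero => norm_num
  | succ k ih =>
      have hpt : z + (((k:ℤ)+1 : ℤ):ℂ)*σ = (z + ((k:ℤ):ℂ)*σ) + σ := by push_cast; ring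
      rw [hpt, H, ih, zpow_add_one₀ hε0,
        show Complex.exp (-π*I*(((((k:ℤ)+1 : ℤ)):ℂ)^2*σ + 2*((((k:ℤ)+1 : ℤ)):ℂ)*z))
          = Complex.exp (-π*I*σ - 2*π*I*(z + ((k:ℤ):ℂ)*σ)) *
            Complex.exp (-π*I*(((k:ℤ):ℂ)^2*σ + 2*((k:ℤ):ℂ)*z)) by
          rw [← Complex.exp_add]; congr 1; push_cast; ring]
      ring
  | pred k ih =>
      have hH := H (z + ((-(k:ℤ)-1 : ℤ):ℂ)*σ) σ
      rw [show z + ((-(k:ℤ)-1 : ℤ):ℂ)*σ + σ = z + ((-(k:ℤ) : ℤ):ℂ)*σ by push_cast; ring,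
        ih] at hH
      have hcne : ε * Complex.exp (-π*I*σ - 2*π*I*(z + ((-(k:ℤ)-1 : ℤ):ℂ)*σ)) ≠ 0 :=
        mul_ne_zero hε0 (Complex.exp_ne_zero _)
      apply mul_left_cancel₀ hcne
      rw [← hH]
      rw [show Complex.exp (-π*I*(((-(k:ℤ) : ℤ):ℂ)^2*σ + 2*((-(k:ℤ) : ℤ):ℂ)*z))
          = Complex.exp (-π*I*σ - 2*π*I*(z + ((-(k:ℤ)-1 : ℤ):ℂ)*σ)) *
            Complex.exp (-π*I*(((-(k:ℤ)-1 : ℤ):ℂ)^2*σ + 2*((-(k:ℤ)-1 : ℤ):ℂ)*z)) by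
          rw [← Complex.exp_add]; congr 1; push_cast; ring,
        show ε ^ (-(k:ℤ)) = ε * ε ^ (-(k:ℤ)-1) by
          rw [mul_comm, ← zpow_add_one₀ hε0]; congr 1; ring]
      ring

lemma neg_one_zpow_congr (p q : ℤ) (h : Even (p - q)) : (-1:ℂ)^p = (-1:ℂ)^q := by
  have hk : ∃ k : ℤ, p = q + 2*k := by
    obtain ⟨k, hk⟩ := h; exact ⟨k, by omega⟩
  obtain ⟨k, rfl⟩ := hk
  rw [zpow_add₀ (by norm_num : (-1:ℂ) ≠ 0), zpow_mul]
  norm_num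

/-- conjugation of M(mτ/2) by theta-function powers. -/
theorem Mtau_theta_conjugation (τ η : ℂ) (hτ : 0 < τ.im) (hη : 0 < η.im)
    (th : ℂ → ℂ → ℂ) (d : ℤ)
    (hth : (th = theta3 ∧ d = 0) ∨ (th = theta4 ∧ d = 1))
    (n m : ℕ) (f : ℂ → ℂ) (z : ℂ)
    (hthz : ∀ s : ℕ, s ≤ m → th (z + ((m:ℂ)-2*s)*τ/2) (τ/2) ≠ 0)
    (hβ : ∀ a : ℤ, |a| ≤ (m:ℤ) → theta1 (2*z - τ*(a:ℂ)) (2*η) ≠ 0)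
    (hbin : ∀ i : ℕ, 1 ≤ i → i ≤ m → theta1 (τ*(i:ℂ)) (2*η) ≠ 0) :
    th z (τ/2)^n * MtauOp τ η m (fun w => th w (τ/2) ^ (-(n:ℤ)) * f w) z =
      (-1:ℂ)^((m:ℤ)*(n:ℤ)*d) * Complex.exp (-2*π*I*(n:ℂ)*z^2/τ) *
      MtauOp τ η m (fun w => Complex.exp (2*π*I*(n:ℂ)*w^2/τ) * f w) z := by
  have hτ0 : τ ≠ 0 := by intro h; rw [h] at hτ; simp at hτ
  have hε0 : ((-1:ℂ)^d) ≠ 0 := zpow_ne_zero d (by norm_num)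
  have hH : ∀ w σ' : ℂ, th (w + σ') σ' =
      ((-1:ℂ)^d) * Complex.exp (-π*I*σ' - 2*π*I*w) * th w σ' := by
    rcases hth with ⟨ht, hd⟩ | ⟨ht, hd⟩ <;> subst ht <;> subst hd <;> intro w σ'
    · rw [theta3_add_period]; norm_num
    · rw [theta4_add_period]; norm_num
  have hshift := th_shift th ((-1:ℂ)^d) hε0 hH (τ/2) z
  have expand : ∀ (g : ℂ → ℂ) (c : ℂ),
      c * MtauOp τ η m g z
      = Complex.exp (2*π*I*z^2/τ) * ∑ s ∈ Finset.range (m+1),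
          c * ((-1:ℂ)^s * betaC τ η m s z *
            Complex.exp (-2*π*I*(z + ((m:ℂ)-2*s)*τ/2)^2/τ) * g (z + ((m:ℂ)-2*s)*τ/2)) := by
    intro g c
    simp only [MtauOp]
    rw [← Finset.mul_sum]
    ring
  rw [expand, expand]
  congr 1
  apply Finset.sum_congr rfl
  intro s hs
  have hsm : s ≤ m := Nat.lt_succ_iff.mp (Finset.mem_range.mp hs)
  set a : ℤ := (m:ℤ) - 2*(s:ℤ) with ha
  have hpt : z + ((m:ℂ) - 2*(s:ℂ))*τ/2 = z + (a:ℂ)*(τ/2) := by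
    rw [ha]; push_cast; ring
  rw [hpt]
  have hth_s := hshift a
  have hthz_s : th (z + (a:ℂ)*(τ/2)) (τ/2) ≠ 0 := by
    have := hthz s hsm; rwa [hpt] at this
  have hthz0 : th z (τ/2) ≠ 0 := by
    intro h0; exact hthz_s (by rw [hth_s, h0, mul_zero])
  have hsign : ((((-1:ℂ)^d)^a))^(-(n:ℤ)) = (-1:ℂ)^((m:ℤ)*(n:ℤ)*d) := by
    rw [← zpow_mul, ← zpow_mul]
    apply neg_one_zpow_congr
    exact ⟨d*(n:ℤ)*((s:ℤ)-(m:ℤ)), by rw [ha]; ring⟩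
  have h1 : th z (τ/2)^n * th z (τ/2) ^ (-(n:ℤ)) = 1 := by
    rw [← zpow_natCast (th z (τ/2)) n, ← zpow_add₀ hthz0]
    simp
  have h2 : Complex.exp (((-(n:ℤ) : ℤ):ℂ) * (-π*I*((a:ℂ)^2*(τ/2) + 2*(a:ℂ)*z)))
      = Complex.exp (-2*π*I*(n:ℂ)*z^2/τ) *
        Complex.exp (2*π*I*(n:ℂ)*(z + (a:ℂ)*(τ/2))^2/τ) := by
    rw [← Complex.exp_add]
    congr 1
    field_simp
    push_cast
    ring
  have key : th z (τ/2)^n * th (z + (a:ℂ)*(τ/2)) (τ/2) ^ (-(n:ℤ))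
      = (-1:ℂ)^((m:ℤ)*(n:ℤ)*d) * Complex.exp (-2*π*I*(n:ℂ)*z^2/τ) *
        Complex.exp (2*π*I*(n:ℂ)*(z + (a:ℂ)*(τ/2))^2/τ) := by
    rw [hth_s, mul_zpow, mul_zpow, hsign, ← Complex.exp_int_mul, h2]
    calc th z (τ/2)^n * ((-1:ℂ)^((m:ℤ)*(n:ℤ)*d) *
          (Complex.exp (-2*π*I*(n:ℂ)*z^2/τ) *
           Complex.exp (2*π*I*(n:ℂ)*(z + (a:ℂ)*(τ/2))^2/τ)) *
          th z (τ/2) ^ (-(n:ℤ)))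
        = (th z (τ/2)^n * th z (τ/2) ^ (-(n:ℤ))) *
          ((-1:ℂ)^((m:ℤ)*(n:ℤ)*d) * Complex.exp (-2*π*I*(n:ℂ)*z^2/τ) *
           Complex.exp (2*π*I*(n:ℂ)*(z + (a:ℂ)*(τ/2))^2/τ)) := by ring
      _ = (-1:ℂ)^((m:ℤ)*(n:ℤ)*d) * Complex.exp (-2*π*I*(n:ℂ)*z^2/τ) *
           Complex.exp (2*π*I*(n:ℂ)*(z + (a:ℂ)*(τ/2))^2/τ) := by rw [h1]; ring
  calc th z (τ/2)^n * ((-1:ℂ)^s * betaC τ η m s z *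
        Complex.exp (-2*π*I*(z + (a:ℂ)*(τ/2))^2/τ) *
        (th (z + (a:ℂ)*(τ/2)) (τ/2) ^ (-(n:ℤ)) * f (z + (a:ℂ)*(τ/2))))
      = (th z (τ/2)^n * th (z + (a:ℂ)*(τ/2)) (τ/2) ^ (-(n:ℤ))) *
        ((-1:ℂ)^s * betaC τ η m s z *
          Complex.exp (-2*π*I*(z + (a:ℂ)*(τ/2))^2/τ) * f (z + (a:ℂ)*(τ/2))) := by ring
    _ = ((-1:ℂ)^((m:ℤ)*(n:ℤ)*d) * Complex.exp (-2*π*I*(n:ℂ)*z^2/τ) *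
          Complex.exp (2*π*I*(n:ℂ)*(z + (a:ℂ)*(τ/2))^2/τ)) *
        ((-1:ℂ)^s * betaC τ η m s z *
          Complex.exp (-2*π*I*(z + (a:ℂ)*(τ/2))^2/τ) * f (z + (a:ℂ)*(τ/2))) := by rw [key]
    _ = (-1:ℂ)^((m:ℤ)*(n:ℤ)*d) * Complex.exp (-2*π*I*(n:ℂ)*z^2/τ) *
        ((-1:ℂ)^s * betaC τ η m s z *
          Complex.exp (-2*π*I*(z + (a:ℂ)*(τ/2))^2/τ) *
          (Complex.exp (2*π*I*(n:ℂ)*(z + (a:ℂ)*(τ/2))^2/τ) * f (z + (a:ℂ)*(τ/2)))) := by ring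
end
end

section
/- Normal-ordered form of the intertwiner on the two-index lattice: for all integers n, m ≥ 0, every function f : ℂ → ℂ, and every z ∈ ℂ at which all θ₁-factors in the denominators of the coefficients α_k^{(n)} and β_s^{(m)} appearing below are nonzero, one has e^{πimz²/η} · [M(nη)(w ↦ e^{−πimw²/η − 2πinw²/τ} · [M(mτ/2)(u ↦ e^{2πinu²/τ} f(u))](w))](z) = (−1)^{nm} ∑_{k=0}^{n} ∑_{s=0}^{m} (−1)^{k+s} α_k^{(n)}(z) β_s^{(m)}(z) E_{k,s}(z) f(z+(n−2k)η+(m−2s)τ/2). -/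
noncomputable section

open Complex BigOperators Finset

local notation "π" => (Real.pi : ℂ)

/-- Phase factor E_{k,s}(z). -/
def Efac (τ η : ℂ) (n m k s : ℕ) (z : ℂ) : ℂ :=
  Complex.exp (((n:ℂ)-1)*((m:ℂ)-2*s)*(π*I*τ*((m:ℂ)-2*s)/2 + 2*π*I*(z+((n:ℂ)-2*k)*η))) *
  Complex.exp (((m:ℂ)-1)*((n:ℂ)-2*k)*(π*I*η*((n:ℂ)-2*k) + 2*π*I*(z+((m:ℂ)-2*s)*τ/2)))

/-- The finite-difference operator M(nη). -/
def MnetaOp (τ η : ℂ) (n : ℕ) (h : ℂ → ℂ) (z : ℂ) : ℂ :=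
  Complex.exp (π*I*z^2/η) * ∑ k ∈ Finset.range (n+1), (-1:ℂ)^k * alphaC τ η n k z *
    Complex.exp (-π*I*(z + ((n:ℂ)-2*k)*η)^2/η) * h (z + ((n:ℂ)-2*k)*η)


lemma theta1_add (x σ : ℂ) :
    theta1 (x + σ) σ = Complex.exp (-π*I - π*I*σ - 2*π*I*x) * theta1 x σ := by
  unfold theta1
  rw [← Equiv.tsum_eq (Equiv.subRight (1:ℤ)) (fun n : ℤ =>
      Complex.exp (π * I * ((n : ℂ) + 1/2)^2 * σ) *
      Complex.exp (2 * π * I * ((n : ℂ) + 1/2) * ((x + σ) + 1/2)))]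
  rw [mul_neg, ← tsum_mul_left, neg_inj]
  refine tsum_congr fun n => ?_
  simp only [Equiv.subRight_apply]
  rw [← Complex.exp_add, ← Complex.exp_add, ← Complex.exp_add]
  congr 1
  push_cast
  ring

lemma theta1_sub (x σ : ℂ) :
    theta1 (x - σ) σ = Complex.exp (π*I - π*I*σ + 2*π*I*x) * theta1 x σ := by
  have h := theta1_add (x - σ) σ
  rw [sub_add_cancel] at h
  rw [h, ← mul_assoc, ← Complex.exp_add,
    show π*I - π*I*σ + 2*π*I*x + (-π*I - π*I*σ - 2*π*I*(x-σ)) = 0 from by ring,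
    Complex.exp_zero, one_mul]

lemma theta1_int (x σ : ℂ) (c : ℤ) :
    theta1 (x + (c:ℂ)*σ) σ
      = Complex.exp (-π*I*c - π*I*σ*(c:ℂ)^2 - 2*π*I*c*x) * theta1 x σ := by
  induction c using Int.induction_on with
  | zero => simp
  | succ c ih =>
    push_cast
    push_cast at ih
    rw [show x + ((c:ℂ)+1)*σ = (x + (c:ℂ)*σ) + σ from by ring, theta1_add, ih,
      ← mul_assoc, ← Complex.exp_add]
    congr 2
    ring
  | pred c ih =>
    push_cast
    push_cast at ih
    rw [show x + (-(c:ℂ)-1)*σ = (x + (-(c:ℂ))*σ) - σ from by ring, theta1_sub, ih,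
      ← mul_assoc, ← Complex.exp_add]
    congr 2
    ring

lemma sum_affine (A B : ℂ) (N : ℕ) :
    ∑ j ∈ Finset.range N, (A + B*(j:ℂ)) = N*A + B*(N*((N:ℂ)-1)/2) := by
  induction N with
  | zero => simp
  | succ N ih => rw [Finset.sum_range_succ, ih]; push_cast; ring

lemma betaC_shift (τ η : ℂ) (m s : ℕ) (z : ℂ) (c : ℤ) :
    betaC τ η m s (z + (c:ℂ)*η)
      = Complex.exp (π*I*m*c + 2*π*I*m*η*(c:ℂ)^2 + 4*π*I*m*c*z
          + π*I*((m:ℂ)-1)*c*τ*((m:ℂ)-2*s)) * betaC τ η m s z := by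
  unfold betaC
  have hnum : theta1 (2*(z + (c:ℂ)*η) + τ*((m:ℂ) - 2*s)) (2*η)
      = Complex.exp (-π*I*c - π*I*(2*η)*(c:ℂ)^2 - 2*π*I*c*(2*z + τ*((m:ℂ)-2*s)))
        * theta1 (2*z + τ*((m:ℂ) - 2*s)) (2*η) := by
    rw [show 2*(z + (c:ℂ)*η) + τ*((m:ℂ) - 2*s)
        = (2*z + τ*((m:ℂ) - 2*s)) + (c:ℂ)*(2*η) from by ring, theta1_int]
  have hden : ∏ j ∈ Finset.range (m+1), theta1 (2*(z + (c:ℂ)*η) - τ*((s:ℂ) - (j:ℂ))) (2*η)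
      = Complex.exp (∑ j ∈ Finset.range (m+1),
          ((-π*I*c - π*I*(2*η)*(c:ℂ)^2 - 2*π*I*c*(2*z - τ*(s:ℂ))) + (-2*π*I*c*τ)*(j:ℂ)))
        * ∏ j ∈ Finset.range (m+1), theta1 (2*z - τ*((s:ℂ) - (j:ℂ))) (2*η) := by
    rw [Complex.exp_sum, ← Finset.prod_mul_distrib]
    refine Finset.prod_congr rfl fun j _ => ?_
    rw [show 2*(z + (c:ℂ)*η) - τ*((s:ℂ) - (j:ℂ))
        = (2*z - τ*((s:ℂ) - (j:ℂ))) + (c:ℂ)*(2*η) from by ring, theta1_int]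
    congr 2
    ring
  rw [hnum, hden, sum_affine,
    show (cB τ η)^m *
      ((∏ j ∈ Finset.range m, theta1 (τ*((j:ℂ)+1)) (2*η)) /
       ((∏ j ∈ Finset.range s, theta1 (τ*((j:ℂ)+1)) (2*η)) *
        (∏ j ∈ Finset.range (m-s), theta1 (τ*((j:ℂ)+1)) (2*η)))) *
      (Complex.exp (-π*I*c - π*I*(2*η)*(c:ℂ)^2 - 2*π*I*c*(2*z + τ*((m:ℂ)-2*s)))
        * theta1 (2*z + τ*((m:ℂ) - 2*s)) (2*η))
      = Complex.exp (-π*I*c - π*I*(2*η)*(c:ℂ)^2 - 2*π*I*c*(2*z + τ*((m:ℂ)-2*s)))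
        * ((cB τ η)^m *
      ((∏ j ∈ Finset.range m, theta1 (τ*((j:ℂ)+1)) (2*η)) /
       ((∏ j ∈ Finset.range s, theta1 (τ*((j:ℂ)+1)) (2*η)) *
        (∏ j ∈ Finset.range (m-s), theta1 (τ*((j:ℂ)+1)) (2*η)))) *
      theta1 (2*z + τ*((m:ℂ) - 2*s)) (2*η)) from by ring,
    mul_div_mul_comm, ← Complex.exp_sub]
  congr 2
  push_cast
  ring

/-- normal-ordered form of the intertwiner on the two-index lattice. -/
theorem normal_ordered_intertwiner (τ η : ℂ) (hτ : 0 < τ.im) (hη : 0 < η.im)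
    (n m : ℕ) (f : ℂ → ℂ) (z : ℂ)
    (hα : ∀ a : ℤ, |a| ≤ (n:ℤ) → theta1 (2*z - 2*η*(a:ℂ)) τ ≠ 0)
    (hαbin : ∀ i : ℕ, 1 ≤ i → i ≤ n → theta1 (2*η*(i:ℂ)) τ ≠ 0)
    (hβ : ∀ k : ℕ, k ≤ n → ∀ a : ℤ, |a| ≤ (m:ℤ) →
        theta1 (2*(z + ((n:ℂ)-2*k)*η) - τ*(a:ℂ)) (2*η) ≠ 0)
    (hβz : ∀ a : ℤ, |a| ≤ (m:ℤ) → theta1 (2*z - τ*(a:ℂ)) (2*η) ≠ 0)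
    (hβbin : ∀ i : ℕ, 1 ≤ i → i ≤ m → theta1 (τ*(i:ℂ)) (2*η) ≠ 0) :
    Complex.exp (π*I*(m:ℂ)*z^2/η) *
      MnetaOp τ η n (fun w => Complex.exp (-π*I*(m:ℂ)*w^2/η - 2*π*I*(n:ℂ)*w^2/τ) *
        MtauOp τ η m (fun u => Complex.exp (2*π*I*(n:ℂ)*u^2/τ) * f u) w) z
    = (-1:ℂ)^(n*m) * ∑ k ∈ Finset.range (n+1), ∑ s ∈ Finset.range (m+1),
        (-1:ℂ)^(k+s) * alphaC τ η n k z * betaC τ η m s z * Efac τ η n m k s z *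
        f (z + ((n:ℂ)-2*k)*η + ((m:ℂ)-2*s)*τ/2) := by
  simp only [MnetaOp, MtauOp, Finset.mul_sum]
  refine Finset.sum_congr rfl fun k hk => Finset.sum_congr rfl fun s hs => ?_
  have hb := betaC_shift τ η m s z ((n:ℤ) - 2*k)
  push_cast at hb
  rw [hb, Efac, pow_add]
  have hη0 : η ≠ 0 := fun h => by simp [h] at hη
  have hτ0 : τ ≠ 0 := fun h => by simp [h] at hτ
  have hsign : ((-1:ℂ))^(n*m) = Complex.exp ((((n*m):ℕ):ℂ) * (π*I)) := by
    rw [Complex.exp_nat_mul, Complex.exp_pi_mul_I]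
  rw [hsign]
  have H : Complex.exp (π*I*(m:ℂ)*z^2/η) * Complex.exp (π*I*z^2/η) *
      Complex.exp (-π*I*(z + ((n:ℂ)-2*k)*η)^2/η) *
      Complex.exp (-π*I*(m:ℂ)*(z + ((n:ℂ)-2*k)*η)^2/η - 2*π*I*(n:ℂ)*(z + ((n:ℂ)-2*k)*η)^2/τ) *
      Complex.exp (2*π*I*(z + ((n:ℂ)-2*k)*η)^2/τ) *
      Complex.exp (π*I*(m:ℂ)*((n:ℂ)-2*k) + 2*π*I*(m:ℂ)*η*((n:ℂ)-2*k)^2 +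
        4*π*I*(m:ℂ)*((n:ℂ)-2*k)*z + π*I*((m:ℂ)-1)*((n:ℂ)-2*k)*τ*((m:ℂ)-2*s)) *
      Complex.exp (-2*π*I*(z + ((n:ℂ)-2*k)*η + ((m:ℂ)-2*s)*τ/2)^2/τ) *
      Complex.exp (2*π*I*(n:ℂ)*(z + ((n:ℂ)-2*k)*η + ((m:ℂ)-2*s)*τ/2)^2/τ)
      = Complex.exp ((((n*m):ℕ):ℂ) * (π*I)) *
        Complex.exp (((n:ℂ)-1)*((m:ℂ)-2*s)*(π*I*τ*((m:ℂ)-2*s)/2 + 2*π*I*(z+((n:ℂ)-2*k)*η))) *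
        Complex.exp (((m:ℂ)-1)*((n:ℂ)-2*k)*(π*I*η*((n:ℂ)-2*k) + 2*π*I*(z+((m:ℂ)-2*s)*τ/2))) := by
    simp only [← Complex.exp_add]
    rw [Complex.exp_eq_exp_iff_exists_int]
    refine ⟨-((m:ℤ)*k), ?_⟩
    push_cast
    have F1 : (z + ((n:ℂ)-2*(k:ℂ))*η)^2/η
        = z^2/η + 2*z*((n:ℂ)-2*(k:ℂ)) + ((n:ℂ)-2*(k:ℂ))^2*η := by
      field_simp; ring
    have F2 : (z + ((n:ℂ)-2*(k:ℂ))*η + ((m:ℂ)-2*(s:ℂ))*τ/2)^2/τ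
        = (z + ((n:ℂ)-2*(k:ℂ))*η)^2/τ + (z + ((n:ℂ)-2*(k:ℂ))*η)*((m:ℂ)-2*(s:ℂ))
          + ((m:ℂ)-2*(s:ℂ))^2*τ/4 := by
      field_simp; ring
    linear_combination (-π*I*((m:ℂ)+1))*F1 + (2*π*I*((n:ℂ)-1))*F2
  linear_combination ((-1:ℂ))^k * (-1:ℂ)^s * alphaC τ η n k z * betaC τ η m s z *
    f (z + ((n:ℂ)-2*k)*η + ((m:ℂ)-2*s)*τ/2) * H
end
end
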